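/- arXiv:2007.10883 — 6 statements merged into one kernel-verified Lean document; each statement's English description precedes it below -/
import Mathlib

section
/- Let X be a compact metric space and f : X → X continuous. For x ∈ X, the special α-limit set sα(x) is nonempty if and only if x ∈ ⋂_{n≥0} f^n(X). -/
open Filter Topology Set

/-- A backward orbit branch of `x`: `u 0 = x` and `f (u (n+1)) = u n`. -/
def IsBackwardBranch {X : Type*} (f : X → X) (x : X) (u : ℕ → X) : Prop :=
  u 0 = x ∧ ∀ n, f (u (n + 1)) = u n

/-- The special α-limit set of `x`: accumulation points of backward orbit branches. -/
def sAlpha {X : Type*} [TopologicalSpace X] (f : X → X) (x : X) : Set X :=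
  {y | ∃ u : ℕ → X, IsBackwardBranch f x u ∧ MapClusterPt y atTop u}

/-- The α-limit set of `x`: accumulation points of preimage sequences. -/
def alphaLimit {X : Type*} [TopologicalSpace X] (f : X → X) (x : X) : Set X :=
  {y | ∃ u : ℕ → X, (∀ n, f^[n] (u n) = x) ∧ MapClusterPt y atTop u}

theorem stmt11 {X : Type*} [MetricSpace X] [CompactSpace X] (f : X → X)
    (hf : Continuous f) (x : X) :
    (sAlpha f x).Nonempty ↔ x ∈ ⋂ n : ℕ, f^[n] '' Set.univ := by
  set K : Set X := ⋂ n : ℕ, f^[n] '' Set.univ with hK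
  constructor
  · rintro ⟨y, u, ⟨hu0, hus⟩, -⟩
    have key : ∀ n, f^[n] (u n) = x := by
      intro n
      induction n with
      | zero => simpa using hu0
      | succ n ih => rw [Function.iterate_succ_apply, hus n, ih]
    refine Set.mem_iInter.2 fun n => ⟨u n, trivial, key n⟩
  · intro hx
    -- Every point of K has a preimage in K.
    have hcomp : ∀ n : ℕ, IsCompact (f^[n] '' Set.univ) :=
      fun n => (isCompact_univ).image (hf.iterate n)
    have hanti : ∀ n : ℕ, f^[n+1] '' Set.univ ⊆ f^[n] '' Set.univ := by
      rintro n z ⟨w, -, rfl⟩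
      exact ⟨f w, trivial, (Function.iterate_succ_apply f n w).symm⟩
    have hpre : ∀ y ∈ K, ∃ z ∈ K, f z = y := by
      intro y hy
      set C : ℕ → Set X := fun n => f ⁻¹' {y} ∩ f^[n] '' Set.univ with hC
      have hCne : ∀ n, (C n).Nonempty := by
        intro n
        have : y ∈ f^[n+1] '' Set.univ := Set.mem_iInter.1 hy (n+1)
        obtain ⟨w, -, hw⟩ := this
        exact ⟨f^[n] w, by simp [C, ← Function.iterate_succ_apply' f n w, hw],
          ⟨w, trivial, rfl⟩⟩
      have hCcomp : ∀ n, IsCompact (C n) :=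
        fun n => ((hcomp n).inter_left (isClosed_singleton.preimage hf))
      have hCclosed : ∀ n, IsClosed (C n) :=
        fun n => (isClosed_singleton.preimage hf).inter (hcomp n).isClosed
      have hCanti : ∀ n, C (n+1) ⊆ C n :=
        fun n => Set.inter_subset_inter_right _ (hanti n)
      have hmono : ∀ {m n : ℕ}, m ≤ n → C n ⊆ C m := by
        intro m n h
        induction h with
        | refl => exact subset_rfl
        | step h ih => exact (hCanti _).trans ih
      obtain ⟨z, hz⟩ := IsCompact.nonempty_iInter_of_directed_nonempty_isCompact_isClosed
        C (fun m n => ⟨max m n, hmono (le_max_left m n), hmono (le_max_right m n)⟩)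
        hCne hCcomp hCclosed
      have hz' := Set.mem_iInter.1 hz
      refine ⟨z, Set.mem_iInter.2 fun n => (hz' n).2, (hz' 0).1⟩
    -- Build a backward branch inside K.
    choose F hFK hFf using hpre
    let w : ℕ → {z : X // z ∈ K} := fun n =>
      Nat.rec ⟨x, hx⟩ (fun _ p => ⟨F p.1 p.2, hFK p.1 p.2⟩) n
    have hbranch : IsBackwardBranch f x (fun n => (w n).1) := by
      refine ⟨rfl, fun n => ?_⟩
      exact hFf (w n).1 (w n).2
    obtain ⟨y, hy⟩ := exists_clusterPt_of_compactSpace (map (fun n => (w n).1) atTop)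
    exact ⟨y, fun n => (w n).1, hbranch, hy⟩
end

section
/- Define f : [0,5] → [0,5] as the piecewise linear map with f(0) = 1, f(1) = 5, f(4) = 2, f(5) = 0, linear on each of [0,1], [1,4], [4,5]. Then sα(0) contains the period-three orbit {0,1,5} and the period-two orbit {2,4}, but does not contain the fixed point 3. -/
open Filter Topology Set

theorem stmt12 (f : Set.Icc (0:ℝ) 5 → Set.Icc (0:ℝ) 5) (hf : Continuous f)
    (hf1 : ∀ x : Set.Icc (0:ℝ) 5, (x : ℝ) ≤ 1 → (f x : ℝ) = 1 + 4 * x)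
    (hf2 : ∀ x : Set.Icc (0:ℝ) 5, 1 ≤ (x : ℝ) → (x : ℝ) ≤ 4 → (f x : ℝ) = 6 - x)
    (hf3 : ∀ x : Set.Icc (0:ℝ) 5, 4 ≤ (x : ℝ) → (f x : ℝ) = 10 - 2 * x) :
    (⟨0, by norm_num⟩ : Set.Icc (0:ℝ) 5) ∈ sAlpha f ⟨0, by norm_num⟩ ∧
    (⟨1, by norm_num⟩ : Set.Icc (0:ℝ) 5) ∈ sAlpha f ⟨0, by norm_num⟩ ∧
    (⟨5, by norm_num⟩ : Set.Icc (0:ℝ) 5) ∈ sAlpha f ⟨0, by norm_num⟩ ∧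
    (⟨2, by norm_num⟩ : Set.Icc (0:ℝ) 5) ∈ sAlpha f ⟨0, by norm_num⟩ ∧
    (⟨4, by norm_num⟩ : Set.Icc (0:ℝ) 5) ∈ sAlpha f ⟨0, by norm_num⟩ ∧
    (⟨3, by norm_num⟩ : Set.Icc (0:ℝ) 5) ∉ sAlpha f ⟨0, by norm_num⟩ := by
  -- the period-three branch 0, 5, 1, 0, 5, 1, ...
  let I := Set.Icc (0:ℝ) 5
  have h0 : (0:ℝ) ∈ I := by norm_num [I]
  have h1 : (1:ℝ) ∈ I := by norm_num [I]
  have h5 : (5:ℝ) ∈ I := by norm_num [I]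
  set u : ℕ → I := fun n => if n % 3 = 0 then ⟨0, h0⟩ else if n % 3 = 1 then ⟨5, h5⟩
    else ⟨1, h1⟩ with hu
  have hf50 : f ⟨5, h5⟩ = ⟨0, h0⟩ := by
    ext; rw [hf3 ⟨5, h5⟩ (by norm_num)]; norm_num
  have hf15 : f ⟨1, h1⟩ = ⟨5, h5⟩ := by
    ext; rw [hf1 ⟨1, h1⟩ (by norm_num)]; norm_num
  have hf01 : f ⟨0, h0⟩ = ⟨1, h1⟩ := by
    ext; rw [hf1 ⟨0, h0⟩ (by norm_num)]; norm_num
  have hub : IsBackwardBranch f (⟨0, h0⟩ : I) u := by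
    constructor
    · simp [hu]
    · intro n
      have h3 : (n+1) % 3 = (n % 3 + 1) % 3 := Nat.add_mod_left _ _ ▸ by omega
      have := Nat.mod_lt n (show 0 < 3 by norm_num)
      interval_cases h : n % 3 <;> simp [hu, Nat.add_mod, h, hf50, hf15, hf01]
  have hcluster : ∀ (k : ℕ) (y : I), u k = y → MapClusterPt y atTop u := by
    intro k y hk
    refine .of_comp (φ := fun m => 3 * m + k) (tendsto_atTop_mono (fun m => by simp only [id_eq]; omega)
      tendsto_id) ?_
    have : (u ∘ fun m => 3 * m + k) = fun _ => y := by
      funext m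
      simp only [Function.comp, hu, Nat.add_mul_mod_self_left] at hk ⊢
      rw [show (3 * m + k) % 3 = k % 3 by omega]
      exact hk
    rw [this]
    exact tendsto_const_nhds.mapClusterPt
  have h24 : ((⟨2, by norm_num [I]⟩ : I) ∈ sAlpha f ⟨0, h0⟩) ∧ ((⟨4, by norm_num [I]⟩ : I) ∈ sAlpha f ⟨0, h0⟩) := by
    have hq : ∀ k : ℕ, (0:ℝ) < (1/2)^k ∧ ((1/2:ℝ))^k ≤ 1 :=
      fun k => ⟨pow_pos (by norm_num) k, pow_le_one₀ (by norm_num) (by norm_num)⟩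
    have hmem1 : ∀ k : ℕ, (2 - 2 * (1/2:ℝ)^k) ∈ I := by
      intro k; obtain ⟨a, b⟩ := hq k; constructor <;> [linarith; linarith]
    have hmem2 : ∀ k : ℕ, (4 + (1/2:ℝ)^k) ∈ I := by
      intro k; obtain ⟨a, b⟩ := hq k; constructor <;> [linarith; linarith]
    set v : ℕ → I := fun n => if Even n then ⟨2 - 2 * (1/2)^(n/2), hmem1 _⟩
      else ⟨4 + (1/2)^(n/2), hmem2 _⟩ with hv
    have hvb : IsBackwardBranch f (⟨0, h0⟩ : I) v := by
      constructor
      · ext; simp [hv]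
      · intro n
        rcases Nat.even_or_odd n with he | ho
        · have hodd : ¬ Even (n+1) := by simpa using he.add_one
          have hdiv : (n+1)/2 = n/2 := by obtain ⟨m, hm⟩ := he; omega
          have : f ⟨4 + (1/2)^(n/2), hmem2 _⟩ = ⟨2 - 2 * (1/2)^(n/2), hmem1 _⟩ := by
            ext
            rw [hf3 _ (by obtain ⟨a, b⟩ := hq (n/2); simp only; linarith)]
            simp only; ring
          simp only [hv, hodd, he, if_true, if_false, hdiv, this]
        · have heven : Even (n+1) := ho.add_one
          have hne : ¬ Even n := by simpa using ho
          have hdiv : (n+1)/2 = n/2 + 1 := by obtain ⟨m, hm⟩ := ho; omega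
          have key : (2 - 2 * (1/2:ℝ)^(n/2+1)) = 2 - (1/2)^(n/2) := by ring
          have : f ⟨2 - 2 * (1/2)^(n/2+1), hmem1 _⟩ = ⟨4 + (1/2)^(n/2), hmem2 _⟩ := by
            ext
            rw [hf2 _ (by simp only [key]; obtain ⟨a, b⟩ := hq (n/2); linarith)
              (by simp only [key]; obtain ⟨a, b⟩ := hq (n/2); linarith)]
            simp only [key]; ring
          simp only [hv, heven, hne, if_true, if_false, hdiv, this]
    have hpow : Tendsto (fun k : ℕ => ((1/2:ℝ))^k) atTop (𝓝 0) :=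
      tendsto_pow_atTop_nhds_zero_of_lt_one (by norm_num) (by norm_num)
    constructor
    · refine ⟨v, hvb, .of_comp (φ := fun m => 2 * m)
        (tendsto_atTop_mono (fun m => by simp only [id_eq]; omega) tendsto_id)
        (Filter.Tendsto.mapClusterPt ?_)⟩
      rw [tendsto_subtype_rng]
      have : (fun m => ((v ∘ fun m => 2 * m) m : ℝ)) = fun m => 2 - 2 * (1/2:ℝ)^m := by
        funext m
        simp [hv, Nat.mul_div_cancel_left m (show 0 < 2 by norm_num), even_two_mul m]
      rw [this]
      have h2 := hpow.const_mul (2:ℝ)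
      simpa using (tendsto_const_nhds (x := (2:ℝ)) (f := atTop)).sub h2
    · refine ⟨v, hvb, .of_comp (φ := fun m => 2 * m + 1)
        (tendsto_atTop_mono (fun m => by simp only [id_eq]; omega) tendsto_id)
        (Filter.Tendsto.mapClusterPt ?_)⟩
      rw [tendsto_subtype_rng]
      have : (fun m => ((v ∘ fun m => 2 * m + 1) m : ℝ)) = fun m => 4 + (1/2:ℝ)^m := by
        funext m
        have : ¬ Even (2 * m + 1) := by simp [Nat.even_add_one, even_two_mul]
        simp [hv, this, show (2*m+1)/2 = m by omega]
      rw [this]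
      simpa using (tendsto_const_nhds (x := (4:ℝ)) (f := atTop)).add hpow
  refine ⟨⟨u, hub, hcluster 0 _ (by simp [hu])⟩,
    ⟨u, hub, hcluster 2 _ (by simp [hu])⟩,
    ⟨u, hub, hcluster 1 _ (by simp [hu])⟩, h24.1, h24.2, ?_⟩
  -- 3 ∉ sAlpha
  rintro ⟨w, ⟨hw0, hwb⟩, hwc⟩
  have key : ∀ n, |((w n : ℝ)) - 3| ≥ 1/2 := by
    intro n
    induction n with
    | zero => rw [hw0]; norm_num
    | succ n ih =>
      by_contra h
      push_neg at h
      have hb : 1 ≤ ((w (n+1) : ℝ)) ∧ ((w (n+1) : ℝ)) ≤ 4 := by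
        rw [abs_lt] at h; constructor <;> linarith
      have := hwb n
      have : ((w n : ℝ)) = 6 - (w (n+1) : ℝ) := by
        rw [← this, hf2 _ hb.1 hb.2]
      rw [this] at ih
      rw [abs_sub_comm, show (3:ℝ) - (6 - (w (n+1):ℝ)) = (w (n+1):ℝ) - 3 by ring] at ih
      linarith
  rw [mapClusterPt_iff_frequently] at hwc
  have hU : {z : I | |(z : ℝ) - 3| < 1/2} ∈ 𝓝 (⟨3, by norm_num [I]⟩ : I) := by
    have hc : Continuous fun z : I => |(z : ℝ) - 3| := by fun_prop
    have := hc.tendsto (⟨3, by norm_num [I]⟩ : I)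
    exact this (IsOpen.mem_nhds isOpen_Iio
      (by norm_num : |((3:ℝ)) - 3| < 1/2))
  obtain ⟨n, hn⟩ := (hwc _ hU).exists
  exact absurd (key n) (not_le.mpr hn)
end

section
/- Let f : [0,1] → [0,1] be continuous and let M be a transitive cycle of intervals for f. If sα(x) contains infinitely many points of M, then x ∈ M and sα(x) ⊇ M. -/
open Filter Topology Set

/-- A cycle of intervals of period `k` for an interval map `f`. -/
def IsIntervalCycle (f : unitInterval → unitInterval) (M : Set unitInterval) (k : ℕ) : Prop :=
  1 ≤ k ∧ ∃ K : Set unitInterval,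
    (∃ a b : unitInterval, a < b ∧ K = Set.Icc a b) ∧
    (∀ i j, i < k → j < k → i ≠ j → Disjoint (f^[i] '' K) (f^[j] '' K)) ∧
    f^[k] '' K = K ∧
    M = ⋃ i ∈ Finset.range k, f^[i] '' K

/-- Topological transitivity of `f` restricted to an invariant set `M`. -/
def TransitiveOn {X : Type*} [TopologicalSpace X] (f : X → X) (M : Set X) : Prop :=
  Set.MapsTo f M M ∧
    ∀ U V : Set X, IsOpen U → IsOpen V → (U ∩ M).Nonempty → (V ∩ M).Nonempty →
      ∃ n : ℕ, (f^[n] '' (U ∩ M) ∩ V).Nonempty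

/-- A transitive cycle of intervals. -/
def IsTransitiveCycle (f : unitInterval → unitInterval) (M : Set unitInterval) (k : ℕ) : Prop :=
  IsIntervalCycle f M k ∧ TransitiveOn f M




noncomputable def gR (f : unitInterval → unitInterval) : ℝ → ℝ :=
  fun t => (f (Set.projIcc 0 1 zero_le_one t) : ℝ)

lemma gR_val (f : unitInterval → unitInterval) (w : unitInterval) :
    gR f (w : ℝ) = (f w : ℝ) := by
  unfold gR; rw [Set.projIcc_val]

lemma gR_cont {f : unitInterval → unitInterval} (hf : Continuous f) : Continuous (gR f) :=
  continuous_subtype_val.comp (hf.comp continuous_projIcc)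

lemma gR_iter_val (f : unitInterval → unitInterval) (n : ℕ) (w : unitInterval) :
    (gR f)^[n] (w : ℝ) = (f^[n] w : ℝ) := by
  induction n with
  | zero => simp
  | succ n ih =>
      rw [Function.iterate_succ_apply', Function.iterate_succ_apply', ih, gR_val]

lemma gR_image (f : unitInterval → unitInterval) (n : ℕ) (S : Set unitInterval) :
    (gR f)^[n] '' (Subtype.val '' S) = Subtype.val '' (f^[n] '' S) := by
  ext t
  constructor
  · rintro ⟨_, ⟨w, hw, rfl⟩, rfl⟩
    exact ⟨f^[n] w, ⟨w, hw, rfl⟩, (gR_iter_val f n w).symm⟩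
  · rintro ⟨_, ⟨w, hw, rfl⟩, rfl⟩
    exact ⟨(w : ℝ), ⟨w, hw, rfl⟩, gR_iter_val f n w⟩

section Rside
variable {G : ℝ → ℝ} {Mr : Set ℝ}

lemma iter_mem (hmaps : ∀ t ∈ Mr, G t ∈ Mr) : ∀ n, ∀ t ∈ Mr, G^[n] t ∈ Mr := by
  intro n
  induction n with
  | zero => intro t ht; simpa using ht
  | succ n ih =>
      intro t ht
      rw [Function.iterate_succ_apply']
      exact hmaps _ (ih t ht)

lemma inv_lemma
    (htrans : ∀ U V : Set ℝ, IsOpen U → IsOpen V → (U ∩ Mr).Nonempty → (V ∩ Mr).Nonempty →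
      ∃ n : ℕ, (G^[n] '' (U ∩ Mr) ∩ V).Nonempty)
    (B : Set ℝ) (hBc : IsClosed B) (hGB : ∀ t ∈ B, G t ∈ B)
    (O : Set ℝ) (hO : IsOpen O) (hOne : (O ∩ Mr).Nonempty) (hOB : O ∩ Mr ⊆ B) :
    Mr ⊆ B := by
  by_contra hcon
  rw [Set.not_subset] at hcon
  obtain ⟨z, hzM, hzB⟩ := hcon
  obtain ⟨n, y, hy1, hy2⟩ := htrans O Bᶜ hO hBc.isOpen_compl hOne ⟨z, hzB, hzM⟩
  obtain ⟨w, hw, rfl⟩ := hy1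
  have hiB : ∀ m, ∀ t ∈ B, G^[m] t ∈ B := by
    intro m
    induction m with
    | zero => intro t ht; simpa using ht
    | succ m ih =>
        intro t ht
        rw [Function.iterate_succ_apply']
        exact hGB _ (ih t ht)
  exact hy2 (hiB n w (hOB hw))


lemma periodic_dense (hG : Continuous G)
    (htrans : ∀ U V : Set ℝ, IsOpen U → IsOpen V → (U ∩ Mr).Nonempty → (V ∩ Mr).Nonempty →
      ∃ n : ℕ, (G^[n] '' (U ∩ Mr) ∩ V).Nonempty)
    {l r : ℝ} (hlr : l < r) (hss : Ioo l r ⊆ Mr) :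
    ∃ p ∈ Ioo l r, ∃ π, 1 ≤ π ∧ G^[π] p = p := by
  by_contra hcon
  push_neg at hcon
  have hper : ∀ p ∈ Ioo l r, ∀ π, 1 ≤ π → G^[π] p ≠ p := fun p hp π hπ => hcon p hp π hπ
  set a₁ : ℝ := l + (r - l)/3 with ha₁
  set a₂ : ℝ := l + 2*(r - l)/3 with ha₂
  have h1 : l < a₁ := by rw [ha₁]; nlinarith
  have h2 : a₁ < a₂ := by rw [ha₁, ha₂]; nlinarith
  have h3 : a₂ < r := by rw [ha₂]; nlinarith
  have hne2 : (Ioo a₁ a₂ ∩ Mr).Nonempty :=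
    ⟨(a₁ + a₂)/2, ⟨by linarith, by linarith⟩, hss ⟨by linarith, by linarith⟩⟩
  have hne3 : (Ioo a₂ r ∩ Mr).Nonempty :=
    ⟨(a₂ + r)/2, ⟨by linarith, by linarith⟩, hss ⟨by linarith, by linarith⟩⟩
  have hne1 : (Ioo l a₁ ∩ Mr).Nonempty :=
    ⟨(l + a₁)/2, ⟨by linarith, by linarith⟩, hss ⟨by linarith, by linarith⟩⟩
  -- step 1 : a point of the middle third going to the right third
  obtain ⟨n₁, y, ⟨w, hw, rfl⟩, hy3⟩ :=
    htrans (Ioo a₁ a₂) (Ioo a₂ r) isOpen_Ioo isOpen_Ioo hne2 hne3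
  have hn₁ : 1 ≤ n₁ := by
    rcases Nat.eq_zero_or_pos n₁ with h | h
    · subst h
      simp only [Function.iterate_zero, id_eq] at hy3
      exact absurd hy3.1 (not_lt.2 hw.1.2.le)
    · exact h
  -- step 2 : a point of U' (still going right at time n₁) also goes to the left third
  have hU'open : IsOpen (Ioo a₁ a₂ ∩ G^[n₁] ⁻¹' (Ioo a₂ r)) :=
    isOpen_Ioo.inter ((hG.iterate n₁).isOpen_preimage _ isOpen_Ioo)
  have hU'ne : ((Ioo a₁ a₂ ∩ G^[n₁] ⁻¹' (Ioo a₂ r)) ∩ Mr).Nonempty :=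
    ⟨w, ⟨hw.1, hy3⟩, hw.2⟩
  obtain ⟨n₂, y₂, ⟨x₀, hx₀, rfl⟩, hy1⟩ :=
    htrans _ (Ioo l a₁) hU'open isOpen_Ioo hU'ne hne1
  have hn₂ : 1 ≤ n₂ := by
    rcases Nat.eq_zero_or_pos n₂ with h | h
    · subst h
      simp only [Function.iterate_zero, id_eq] at hy1
      exact absurd hy1.2 (not_lt.2 hx₀.1.1.1.le)
    · exact h
  obtain ⟨⟨hx₀2, hx₀hi⟩, hx₀M⟩ := hx₀
  -- basic positions
  have hx₀J : x₀ ∈ Ioo l r := ⟨lt_trans h1 hx₀2.1, lt_trans hx₀2.2 h3⟩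
  have hhiJ : G^[n₁] x₀ ∈ Ioo l r := ⟨lt_trans (lt_trans h1 h2) hx₀hi.1, hx₀hi.2⟩
  have hloJ : G^[n₂] x₀ ∈ Ioo l r := ⟨hy1.1, lt_trans hy1.2 (lt_trans h2 h3)⟩
  have hxlt : x₀ < G^[n₁] x₀ := lt_trans hx₀2.2 hx₀hi.1
  have hxgt : G^[n₂] x₀ < x₀ := lt_trans hy1.2 hx₀2.1
  -- Claim C+ : for all k ≥ 1, x₀ < G^[k * n₁] x₀
  have Cplus : ∀ k, 1 ≤ k → x₀ < G^[k * n₁] x₀ := by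
    intro k
    induction k with
    | zero => omega
    | succ k ih =>
        intro _
        rcases Nat.eq_zero_or_pos k with hk | hk
        · subst hk; simpa using hxlt
        · have IH := ih hk
          by_contra hle
          push_neg at hle
          have hne : G^[(k+1) * n₁] x₀ ≠ x₀ :=
            hper x₀ hx₀J _ (Nat.mul_pos (Nat.succ_pos k) hn₁)
          have hlt : G^[(k+1) * n₁] x₀ < x₀ := lt_of_le_of_ne hle hne
          set ψ : ℝ → ℝ := fun t => G^[k * n₁] t - t with hψ
          have hψc : ContinuousOn ψ (Icc x₀ (G^[n₁] x₀)) :=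
            ((hG.iterate _).sub continuous_id).continuousOn
          have hv1 : 0 < ψ x₀ := by simp only [hψ]; linarith
          have hv2 : ψ (G^[n₁] x₀) < 0 := by
            have : G^[k * n₁] (G^[n₁] x₀) = G^[(k+1) * n₁] x₀ := by
              rw [← Function.iterate_add_apply]
              congr 1
              ring
            simp only [hψ, this]
            linarith
          have h0 : (0:ℝ) ∈ Icc (ψ (G^[n₁] x₀)) (ψ x₀) := ⟨hv2.le, hv1.le⟩
          obtain ⟨c, hc, hc0⟩ := intermediate_value_Icc' hxlt.le hψc h0
          have hcJ : c ∈ Ioo l r := ⟨lt_of_lt_of_le hx₀J.1 hc.1, lt_of_le_of_lt hc.2 hhiJ.2⟩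
          have : G^[k * n₁] c = c := by
            have := hc0
            simp only [hψ] at this
            linarith
          exact hper c hcJ _ (Nat.mul_pos hk (by omega)) this
  -- Claim C- : for all k ≥ 1, G^[k * n₂] x₀ < x₀
  have Cminus : ∀ k, 1 ≤ k → G^[k * n₂] x₀ < x₀ := by
    intro k
    induction k with
    | zero => omega
    | succ k ih =>
        intro _
        rcases Nat.eq_zero_or_pos k with hk | hk
        · subst hk; simpa using hxgt
        · have IH := ih hk
          by_contra hle
          push_neg at hle
          have hne : G^[(k+1) * n₂] x₀ ≠ x₀ :=
            hper x₀ hx₀J _ (Nat.mul_pos (Nat.succ_pos k) hn₂)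
          have hlt : x₀ < G^[(k+1) * n₂] x₀ := lt_of_le_of_ne hle (Ne.symm hne)
          set ψ : ℝ → ℝ := fun t => G^[k * n₂] t - t with hψ
          have hψc : ContinuousOn ψ (Icc (G^[n₂] x₀) x₀) :=
            ((hG.iterate _).sub continuous_id).continuousOn
          have hv1 : ψ x₀ < 0 := by simp only [hψ]; linarith
          have hv2 : 0 < ψ (G^[n₂] x₀) := by
            have : G^[k * n₂] (G^[n₂] x₀) = G^[(k+1) * n₂] x₀ := by
              rw [← Function.iterate_add_apply]
              congr 1
              ring
            simp only [hψ, this]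
            linarith
          have h0 : (0:ℝ) ∈ Icc (ψ x₀) (ψ (G^[n₂] x₀)) := ⟨hv1.le, hv2.le⟩
          obtain ⟨c, hc, hc0⟩ := intermediate_value_Icc' hxgt.le hψc h0
          have hcJ : c ∈ Ioo l r := ⟨lt_of_lt_of_le hloJ.1 hc.1, lt_of_le_of_lt hc.2 hx₀J.2⟩
          have : G^[k * n₂] c = c := by
            have := hc0
            simp only [hψ] at this
            linarith
          exact hper c hcJ _ (Nat.mul_pos hk (by omega)) this
  have hA := Cplus n₂ hn₂
  have hB := Cminus n₁ hn₁
  rw [mul_comm] at hB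
  linarith

lemma cover_pack (hG : Continuous G) (hMr : IsCompact Mr) (hsub : Mr ⊆ Icc 0 1)
    (hmaps : ∀ t ∈ Mr, G t ∈ Mr)
    (htrans : ∀ U V : Set ℝ, IsOpen U → IsOpen V → (U ∩ Mr).Nonempty → (V ∩ Mr).Nonempty →
      ∃ n : ℕ, (G^[n] '' (U ∩ Mr) ∩ V).Nonempty)
    {l r : ℝ} (hlr : l < r) (hss : Ioo l r ⊆ Mr) :
    ∃ (p q : ℝ) (F : Set ℝ), l < p ∧ p < q ∧ q < r ∧ F.Finite ∧
      ∀ w, w ∈ Mr → w ∉ F → (∀ π, 1 ≤ π → G^[π] w ≠ w) →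
        ∀ Fa : Set ℝ, Fa.Finite → ∃ Δ qq, 1 ≤ Δ ∧ qq ∈ Icc p q ∧ qq ∉ Fa ∧ G^[Δ] qq = w := by
  set m : ℝ := (l + r)/2 with hm
  have hm1 : l < m := by rw [hm]; linarith
  have hm2 : m < r := by rw [hm]; linarith
  obtain ⟨p, hp, π₁, hπ₁, hp_per⟩ :=
    periodic_dense hG htrans hm1 (fun t ht => hss ⟨ht.1, lt_trans ht.2 hm2⟩)
  obtain ⟨q, hq, π₂, hπ₂, hq_per⟩ :=
    periodic_dense hG htrans hm2 (fun t ht => hss ⟨lt_trans hm1 ht.1, ht.2⟩)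
  have hpq : p < q := lt_trans hp.2 hq.1
  set T : ℕ := π₁ * π₂ with hT
  have hT1 : 1 ≤ T := Nat.mul_pos hπ₁ hπ₂
  have hpT : G^[T] p = p := by
    rw [hT, Function.iterate_mul]
    exact Function.iterate_fixed hp_per π₂
  have hqT : G^[T] q = q := by
    rw [hT, mul_comm, Function.iterate_mul]
    exact Function.iterate_fixed hq_per π₁
  have hlp : l < p := hp.1
  have hqr : q < r := hq.2
  set H : Set ℝ := Icc p q with hH
  have hHlr : H ⊆ Ioo l r := fun t ht => ⟨lt_of_lt_of_le hlp ht.1, lt_of_le_of_lt ht.2 hqr⟩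
  have hHM : H ⊆ Mr := fun t ht => hss (hHlr ht)
  -- the seed property
  have hseed : H ⊆ G^[T] '' H := by
    have hconn : IsPreconnected (G^[T] '' H) :=
      isPreconnected_Icc.image _ (hG.iterate T).continuousOn
    have hpm : p ∈ G^[T] '' H := ⟨p, ⟨le_rfl, hpq.le⟩, hpT⟩
    have hqm : q ∈ G^[T] '' H := ⟨q, ⟨hpq.le, le_rfl⟩, hqT⟩
    exact hconn.Icc_subset hpm hqm
  -- increasing image family
  have hDmono : ∀ i m₁ m₂ : ℕ, m₁ ≤ m₂ → G^[i + m₁ * T] '' H ⊆ G^[i + m₂ * T] '' H := by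
    intro i m₁ m₂ hle
    induction m₂ with
    | zero =>
        have : m₁ = 0 := Nat.le_zero.1 hle
        subst this; exact subset_rfl
    | succ m₂ ih =>
        rcases Nat.lt_or_ge m₁ (m₂ + 1) with h | h
        · have h' : m₁ ≤ m₂ := by omega
          refine (ih h').trans ?_
          have harith : i + (m₂ + 1) * T = (i + m₂ * T) + T := by ring
          rw [harith]
          rintro t ⟨w, hw, rfl⟩
          obtain ⟨w', hw', hww⟩ := hseed hw
          exact ⟨w', hw', by rw [Function.iterate_add_apply, hww]⟩
        · have : m₁ = m₂ + 1 := by omega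
          subst this; exact subset_rfl
  set A : ℕ → Set ℝ := fun i => ⋃ m : ℕ, G^[i + m * T] '' H with hA
  have hAne : ∀ i, (A i).Nonempty := by
    intro i
    exact ⟨G^[i + 0 * T] p, Set.mem_iUnion.2 ⟨0, ⟨p, ⟨le_rfl, hpq.le⟩, rfl⟩⟩⟩
  have hAM : ∀ i, A i ⊆ Mr := by
    intro i t ht
    obtain ⟨m, w, hw, rfl⟩ := Set.mem_iUnion.1 ht
    exact iter_mem hmaps _ _ (hHM hw)
  have hbddA : ∀ i, BddAbove (A i) ∧ BddBelow (A i) := by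
    intro i
    constructor
    · exact ⟨1, fun t ht => (hsub (hAM i ht)).2⟩
    · exact ⟨0, fun t ht => (hsub (hAM i ht)).1⟩
  have hIcc : ∀ i, ∀ s ∈ A i, ∀ t ∈ A i, Icc s t ⊆ A i := by
    intro i s hs t ht
    obtain ⟨ms, hms⟩ := Set.mem_iUnion.1 hs
    obtain ⟨mt, hmt⟩ := Set.mem_iUnion.1 ht
    have hs' : s ∈ G^[i + max ms mt * T] '' H := hDmono i ms _ (le_max_left _ _) hms
    have ht' : t ∈ G^[i + max ms mt * T] '' H := hDmono i mt _ (le_max_right _ _) hmt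
    have hconn : IsPreconnected (G^[i + max ms mt * T] '' H) :=
      isPreconnected_Icc.image _ (hG.iterate _).continuousOn
    intro u hu
    exact Set.mem_iUnion.2 ⟨max ms mt, hconn.Icc_subset hs' ht' hu⟩
  set c : ℕ → ℝ := fun i => sInf (A i) with hc
  set d : ℕ → ℝ := fun i => sSup (A i) with hd
  have hAIcc : ∀ i, A i ⊆ Icc (c i) (d i) := by
    intro i t ht
    exact ⟨csInf_le (hbddA i).2 ht, le_csSup (hbddA i).1 ht⟩
  have hclIcc : ∀ i, closure (A i) ⊆ Icc (c i) (d i) := fun i =>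
    closure_minimal (hAIcc i) isClosed_Icc
  have hIooA : ∀ i, Ioo (c i) (d i) ⊆ A i := by
    intro i u hu
    obtain ⟨s, hsA, hs⟩ := exists_lt_of_csInf_lt (hAne i) hu.1
    obtain ⟨t, htA, ht⟩ := exists_lt_of_lt_csSup (hAne i) hu.2
    exact hIcc i s hsA t htA ⟨hs.le, ht.le⟩
  set B : Set ℝ := ⋃ i ∈ Finset.Icc 1 T, closure (A i) with hB
  have hBclosed : IsClosed B := by
    apply Set.Finite.isClosed_biUnion (Finset.Icc 1 T).finite_toSet
    intro i _
    exact isClosed_closure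
  have hGA : ∀ i, 1 ≤ i → i ≤ T → ∃ i', 1 ≤ i' ∧ i' ≤ T ∧ G '' (A i) ⊆ A i' := by
    intro i hi1 hiT
    by_cases hiT' : i = T
    · subst hiT'
      refine ⟨1, le_rfl, hT1, ?_⟩
      rintro t ⟨s, hs, rfl⟩
      obtain ⟨m, w, hw, rfl⟩ := Set.mem_iUnion.1 hs
      have hstep : G (G^[T + m * T] w) = G^[T + m * T + 1] w :=
        (Function.iterate_succ_apply' G _ w).symm
      rw [hstep]
      refine Set.mem_iUnion.2 ⟨m + 1, ⟨w, hw, ?_⟩⟩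
      congr 1
      ring
    · refine ⟨i + 1, by omega, by omega, ?_⟩
      rintro t ⟨s, hs, rfl⟩
      obtain ⟨m, w, hw, rfl⟩ := Set.mem_iUnion.1 hs
      have hstep : G (G^[i + m * T] w) = G^[i + m * T + 1] w :=
        (Function.iterate_succ_apply' G _ w).symm
      rw [hstep]
      refine Set.mem_iUnion.2 ⟨m, ⟨w, hw, ?_⟩⟩
      congr 1
      ring
  have hGB : ∀ t ∈ B, G t ∈ B := by
    intro t ht
    obtain ⟨i, hi', hti⟩ := Set.mem_iUnion₂.1 ht
    rw [Finset.mem_Icc] at hi'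
    obtain ⟨i', h1, h2, hsub'⟩ := hGA i hi'.1 hi'.2
    have hmem : G t ∈ closure (G '' (A i)) :=
      image_closure_subset_closure_image hG ⟨t, hti, rfl⟩
    exact Set.mem_iUnion₂.2 ⟨i', by rw [Finset.mem_Icc]; omega, closure_mono hsub' hmem⟩
  have hOB : Ioo p q ∩ Mr ⊆ B := by
    intro t ht
    have htH : t ∈ H := ⟨ht.1.1.le, ht.1.2.le⟩
    have : t ∈ A T := by
      refine Set.mem_iUnion.2 ⟨0, ?_⟩
      have : T + 0 * T = T := by ring
      rw [this]
      exact hseed htH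
    exact Set.mem_iUnion₂.2 ⟨T, by rw [Finset.mem_Icc]; omega, subset_closure this⟩
  have hOne : (Ioo p q ∩ Mr).Nonempty :=
    ⟨(p+q)/2, ⟨by linarith, by linarith⟩, hHM ⟨by linarith, by linarith⟩⟩
  have hMB : Mr ⊆ B := inv_lemma htrans B hBclosed hGB (Ioo p q) isOpen_Ioo hOne hOB
  -- the finite bad set
  refine ⟨p, q, ⋃ i ∈ Finset.Icc 1 T, {c i, d i}, hlp, hpq, hqr, ?_, ?_⟩
  · apply Set.Finite.biUnion (Finset.Icc 1 T).finite_toSet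
    intro i _
    exact (Set.finite_singleton _).insert _
  · intro w hwM hwF hnp Fa hFa
    obtain ⟨i, hi', hwi'⟩ := Set.mem_iUnion₂.1 (hMB hwM)
    rw [Finset.mem_Icc] at hi'
    have hwcd : w ∈ Icc (c i) (d i) := hclIcc i hwi'
    have hwne : w ≠ c i ∧ w ≠ d i := by
      constructor <;> intro h <;> apply hwF <;>
        exact Set.mem_iUnion₂.2 ⟨i, by rw [Finset.mem_Icc]; omega, by simp [h]⟩
    have hwIoo : w ∈ Ioo (c i) (d i) :=
      ⟨lt_of_le_of_ne hwcd.1 (Ne.symm hwne.1), lt_of_le_of_ne hwcd.2 hwne.2⟩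
    have hwA : w ∈ A i := hIooA i hwIoo
    obtain ⟨m₀, hm₀⟩ := Set.mem_iUnion.1 hwA
    -- for each j, a preimage in H at time i + (m₀ + j) * T
    have hsel : ∀ j : ℕ, ∃ qq ∈ H, G^[i + (m₀ + j) * T] qq = w := by
      intro j
      have : w ∈ G^[i + (m₀ + j) * T] '' H := hDmono i m₀ (m₀ + j) (by omega) hm₀
      obtain ⟨qq, hqq, hqq'⟩ := this
      exact ⟨qq, hqq, hqq'⟩
    choose qsel hqsel1 hqsel2 using hsel
    by_cases hall : ∀ j, qsel j ∈ Fa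
    · exfalso
      obtain ⟨j, -, j', -, hjj', heq⟩ :=
        Set.infinite_univ.exists_ne_map_eq_of_mapsTo
          (f := qsel) (fun j _ => hall j) hFa
      rcases hjj'.lt_or_gt with h | h
      · have harith : i + (m₀ + j') * T = (j' - j) * T + (i + (m₀ + j) * T) := by
          have : m₀ + j' = (j' - j) + (m₀ + j) := by omega
          rw [this]; ring
        have : G^[(j' - j) * T] w = w := by
          conv_lhs => rw [← hqsel2 j]
          rw [← Function.iterate_add_apply, ← harith]
          rw [heq]
          exact hqsel2 j'
        exact hnp _ (Nat.mul_pos (by omega) hT1) this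
      · have harith : i + (m₀ + j) * T = (j - j') * T + (i + (m₀ + j') * T) := by
          have : m₀ + j = (j - j') + (m₀ + j') := by omega
          rw [this]; ring
        have : G^[(j - j') * T] w = w := by
          conv_lhs => rw [← hqsel2 j']
          rw [← Function.iterate_add_apply, ← harith]
          rw [← heq]
          exact hqsel2 j
        exact hnp _ (Nat.mul_pos (by omega) hT1) this
    · push_neg at hall
      obtain ⟨j, hj⟩ := hall
      exact ⟨i + (m₀ + j) * T, qsel j, by omega, hqsel1 j, hj, hqsel2 j⟩

lemma rmain (hG : Continuous G) (hMr : IsCompact Mr) (hsub : Mr ⊆ Icc 0 1)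
    (hmaps : ∀ t ∈ Mr, G t ∈ Mr)
    (htrans : ∀ U V : Set ℝ, IsOpen U → IsOpen V → (U ∩ Mr).Nonempty → (V ∩ Mr).Nonempty →
      ∃ n : ℕ, (G^[n] '' (U ∩ Mr) ∩ V).Nonempty)
    (hloc : ∀ t ∈ Mr, ∀ δ : ℝ, 0 < δ → ∃ lq rq : ℚ, (lq:ℝ) < (rq:ℝ) ∧
      Ioo (lq:ℝ) (rq:ℝ) ⊆ Mr ∧ Ioo (lq:ℝ) (rq:ℝ) ⊆ Metric.ball t δ)
    (x' : ℝ) (hPre : {t | t ∈ Mr ∧ ∃ n, G^[n] t = x'}.Infinite) :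
    ∃ (P : ℕ → ℝ) (S : ℕ → ℕ), StrictMono S ∧ (∀ t, P t ∈ Mr) ∧ G^[S 0] (P 0) = x' ∧
      (∀ t, G^[S (t+1) - S t] (P (t+1)) = P t) ∧
      ∀ z ∈ Mr, ∀ ε : ℝ, 0 < ε → {t : ℕ | |P t - z| ≤ ε}.Infinite := by
  classical
  -- countable family of good rational intervals
  set GOOD : Set (ℚ × ℚ) := {lr | ((lr.1 : ℝ) < (lr.2 : ℝ)) ∧ Ioo (lr.1 : ℝ) (lr.2 : ℝ) ⊆ Mr}
    with hGOOD
  have hGOODne : GOOD.Nonempty := by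
    obtain ⟨t₀, ht₀⟩ := hPre.nonempty
    obtain ⟨lq, rq, h1, h2, h3⟩ := hloc t₀ ht₀.1 1 one_pos
    exact ⟨(lq, rq), h1, h2⟩
  obtain ⟨e, he⟩ := (Set.to_countable GOOD).exists_eq_range hGOODne
  have hegood : ∀ j, ((e j).1 : ℝ) < ((e j).2 : ℝ) ∧ Ioo ((e j).1 : ℝ) ((e j).2 : ℝ) ⊆ Mr := by
    intro j
    have : e j ∈ GOOD := he ▸ Set.mem_range_self j
    exact this
  -- choose covering packs for each index
  have hpacks : ∀ j : ℕ, ∃ (p q : ℝ) (F : Set ℝ),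
      ((e j).1 : ℝ) < p ∧ p < q ∧ q < ((e j).2 : ℝ) ∧ F.Finite ∧
      ∀ w, w ∈ Mr → w ∉ F → (∀ π, 1 ≤ π → G^[π] w ≠ w) →
        ∀ Fa : Set ℝ, Fa.Finite → ∃ Δ qq, 1 ≤ Δ ∧ qq ∈ Icc p q ∧ qq ∉ Fa ∧ G^[Δ] qq = w :=
    fun j => cover_pack hG hMr hsub hmaps htrans (hegood j).1 (hegood j).2
  choose pp qq FF hpl hpq hqr hFfin hmain using hpacks
  have hIccMr : ∀ j, Icc (pp j) (qq j) ⊆ Mr := by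
    intro j t ht
    exact (hegood j).2 ⟨lt_of_lt_of_le (hpl j) ht.1, lt_of_le_of_lt ht.2 (hqr j)⟩
  set tgt : ℕ → ℕ := fun t => (Nat.unpair t).1 with htgt
  set np : ℝ → Prop := fun w => ∀ π, 1 ≤ π → G^[π] w ≠ w with hnp
  -- finiteness of periodic preimages
  have hPerFin : {w | (w ∈ Mr ∧ ∃ n, G^[n] w = x') ∧ ∃ π, 1 ≤ π ∧ G^[π] w = w}.Finite := by
    by_cases hne : {w | (w ∈ Mr ∧ ∃ n, G^[n] w = x') ∧ ∃ π, 1 ≤ π ∧ G^[π] w = w}.Nonempty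
    · obtain ⟨t₀, ⟨-, n₀, hn₀⟩, π₀, hπ₀, hper₀⟩ := hne
      have hx'per : G^[π₀] x' = x' := by
        rw [← hn₀, ← Function.iterate_add_apply]
        have hcm : π₀ + n₀ = n₀ + π₀ := Nat.add_comm _ _
        rw [hcm, Function.iterate_add_apply, hper₀]
      refine Set.Finite.subset ((Set.finite_Iio π₀).image (fun j => G^[j] x')) ?_
      rintro w ⟨⟨-, n, hn⟩, π, hπ, hper⟩
      have h1 : G^[π * n] w = w := by
        rw [Function.iterate_mul]
        exact Function.iterate_fixed hper n
      have h2 : w = G^[π * n - n] x' := by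
        rw [← hn, ← Function.iterate_add_apply]
        have : π * n - n + n = π * n := by
          have : n ≤ π * n := Nat.le_mul_of_pos_left n hπ
          omega
        rw [this, h1]
      -- reduce the exponent mod π₀
      have hx'mul : ∀ mq : ℕ, G^[mq * π₀] x' = x' := by
        intro mq
        rw [mul_comm, Function.iterate_mul]
        exact Function.iterate_fixed hx'per mq
      refine ⟨(π * n - n) % π₀, Nat.mod_lt _ (by omega), ?_⟩
      have hsplit : π * n - n = (π * n - n) % π₀ + ((π * n - n) / π₀) * π₀ :=
        (Nat.mod_add_div' _ _).symm
      show G^[(π * n - n) % π₀] x' = w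
      rw [h2]
      conv_rhs => rw [hsplit, Function.iterate_add_apply, hx'mul ((π * n - n)/π₀)]
    · rw [Set.not_nonempty_iff_eq_empty] at hne
      rw [hne]; exact Set.finite_empty
  -- base point
  obtain ⟨p₀, hp₀pre, hp₀bad⟩ :=
    (hPre.diff (hPerFin.union (hFfin (tgt 1)))).nonempty
  rw [Set.mem_union] at hp₀bad
  push_neg at hp₀bad
  obtain ⟨hp₀M, S₀, hS₀⟩ := hp₀pre
  have hp₀np : np p₀ := by
    intro π hπ hcon
    exact hp₀bad.1 ⟨⟨hp₀M, S₀, hS₀⟩, π, hπ, hcon⟩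
  -- invariant for the recursion
  set Inv : ℕ → ℝ × ℕ → Prop := fun t s =>
    s.1 ∈ Mr ∧ np s.1 ∧ s.1 ∉ FF (tgt (t+1)) ∧ G^[s.2] s.1 = x' ∧
      (1 ≤ t → s.1 ∈ Icc (pp (tgt t)) (qq (tgt t))) with hInv
  have hbase : Inv 0 (p₀, S₀) := ⟨hp₀M, hp₀np, hp₀bad.2, hS₀, by omega⟩
  have hstepEx : ∀ t (s : ℝ × ℕ), Inv t s →
      ∃ s' : ℝ × ℕ, Inv (t+1) s' ∧ s.2 < s'.2 ∧ G^[s'.2 - s.2] s'.1 = s.1 := by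
    intro t s hs
    obtain ⟨hsM, hsnp, hsF, hsIt, -⟩ := hs
    obtain ⟨Δ, q', hΔ, hq'H, hq'F, hq'it⟩ :=
      hmain (tgt (t+1)) s.1 hsM hsF hsnp (FF (tgt (t+2))) (hFfin (tgt (t+2)))
    refine ⟨(q', s.2 + Δ), ⟨hIccMr _ hq'H, ?_, hq'F, ?_, fun _ => hq'H⟩, by omega, ?_⟩
    · intro π hπ hcon
      apply hsnp π hπ
      calc G^[π] s.1 = G^[π] (G^[Δ] q') := by rw [hq'it]
        _ = G^[Δ] (G^[π] q') := by
            rw [← Function.iterate_add_apply, ← Function.iterate_add_apply, Nat.add_comm]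
        _ = s.1 := by rw [hcon, hq'it]
    · rw [Function.iterate_add_apply, hq'it, hsIt]
    · have : s.2 + Δ - s.2 = Δ := by omega
      rw [this, hq'it]
  -- the recursive construction
  let D : ℕ → Type := fun t => {s : ℝ × ℕ // Inv t s}
  let step : ∀ t, D t → D (t+1) := fun t d =>
    ⟨(hstepEx t d.1 d.2).choose, (hstepEx t d.1 d.2).choose_spec.1⟩
  let seq : ∀ t, D t := fun t => Nat.rec ⟨(p₀, S₀), hbase⟩ step t
  set P : ℕ → ℝ := fun t => (seq t).1.1 with hP
  set S : ℕ → ℕ := fun t => (seq t).1.2 with hS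
  have hrel : ∀ t, S t < S (t+1) ∧ G^[S (t+1) - S t] (P (t+1)) = P t := by
    intro t
    have h := (hstepEx t (seq t).1 (seq t).2).choose_spec
    exact ⟨h.2.1, h.2.2⟩
  have hSmono : StrictMono S := strictMono_nat_of_lt_succ (fun t => (hrel t).1)
  have hInvall : ∀ t, Inv t (seq t).1 := fun t => (seq t).2
  refine ⟨P, S, hSmono, fun t => (hInvall t).1, ?_, fun t => (hrel t).2, ?_⟩
  · exact (hInvall 0).2.2.2.1
  · intro z hz ε hε
    obtain ⟨lq, rq, hlt, hsubM, hball⟩ := hloc z hz ε hε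
    have hgood : (lq, rq) ∈ GOOD := ⟨hlt, hsubM⟩
    rw [he] at hgood
    obtain ⟨j, hj⟩ := hgood
    refine Set.infinite_of_injective_forall_mem
      (f := fun m : ℕ => Nat.pair j (m + 1)) ?_ ?_
    · intro m m' hmm'
      have := congrArg (fun t => (Nat.unpair t).2) hmm'
      simpa [Nat.unpair_pair] using this
    · intro m
      set t := Nat.pair j (m + 1) with ht
      have htgt : tgt t = j := by simp [htgt, ht, Nat.unpair_pair]
      have ht1 : 1 ≤ t := le_trans (by omega) (Nat.right_le_pair j (m+1))
      have hPt : P t ∈ Icc (pp j) (qq j) := by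
        have := (hInvall t).2.2.2.2 ht1
        rwa [htgt] at this
      have hPIoo : P t ∈ Ioo (lq : ℝ) (rq : ℝ) := by
        have h1 : ((e j).1 : ℝ) < pp j := hpl j
        have h2 : qq j < ((e j).2 : ℝ) := hqr j
        rw [hj] at h1 h2
        exact ⟨lt_of_lt_of_le h1 hPt.1, lt_of_le_of_lt hPt.2 h2⟩
      have := hball hPIoo
      rw [Metric.mem_ball, Real.dist_eq] at this
      exact le_of_lt this

end Rside

lemma struct_loc {G : ℝ → ℝ} {Mr : Set ℝ} (hG : Continuous G)
    {a b : ℝ} (hab : a < b) {k : ℕ} (hk : 1 ≤ k)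
    (hcyc : G^[k] '' (Icc a b) = Icc a b)
    (hMU : Mr = ⋃ i ∈ Finset.range k, G^[i] '' (Icc a b)) :
    ∃ E : Set ℝ, E.Finite ∧
      (∀ t ∈ Mr, t ∉ E → ∃ c d : ℝ, c < t ∧ t < d ∧ Ioo c d ⊆ Mr) ∧
      (∀ t ∈ Mr, ∀ δ : ℝ, 0 < δ → ∃ lq rq : ℚ, (lq:ℝ) < (rq:ℝ) ∧
        Ioo (lq:ℝ) (rq:ℝ) ⊆ Mr ∧ Ioo (lq:ℝ) (rq:ℝ) ⊆ Metric.ball t δ) := by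
  set Si : ℕ → Set ℝ := fun i => G^[i] '' (Icc a b) with hSi
  have hScomp : ∀ i, IsCompact (Si i) := fun i => isCompact_Icc.image (hG.iterate i)
  have hSconn : ∀ i, IsConnected (Si i) := fun i =>
    ⟨(Set.nonempty_Icc.2 hab.le).image _,
      isPreconnected_Icc.image _ (hG.iterate i).continuousOn⟩
  have hSIcc : ∀ i, Si i = Icc (sInf (Si i)) (sSup (Si i)) := fun i =>
    eq_Icc_of_connected_compact (hSconn i) (hScomp i)
  have hSM : ∀ i, i < k → Si i ⊆ Mr := by
    intro i hi t ht
    rw [hMU]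
    exact Set.mem_iUnion₂.2 ⟨i, Finset.mem_range.2 hi, ht⟩
  have hSnd : ∀ i, i < k → sInf (Si i) < sSup (Si i) := by
    intro i hi
    by_contra hcon
    push_neg at hcon
    have hsub : (Si i).Subsingleton := by
      intro s hs t ht
      have hs' := (hSIcc i) ▸ hs
      have ht' := (hSIcc i) ▸ ht
      have : s ≤ t := le_trans hs'.2 (le_trans hcon ht'.1)
      have : t ≤ s := le_trans ht'.2 (le_trans hcon hs'.1)
      linarith [((hSIcc i) ▸ hs : s ∈ Icc (sInf (Si i)) (sSup (Si i))).2,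
        ((hSIcc i) ▸ ht : t ∈ Icc (sInf (Si i)) (sSup (Si i))).1,
        ((hSIcc i) ▸ hs : s ∈ Icc (sInf (Si i)) (sSup (Si i))).1,
        ((hSIcc i) ▸ ht : t ∈ Icc (sInf (Si i)) (sSup (Si i))).2]
    have hIccss : (Icc a b).Subsingleton := by
      have heq : Icc a b = G^[k - i] '' (Si i) := by
        rw [hSi]
        rw [← Set.image_comp, ← Function.iterate_add]
        have : k - i + i = k := by omega
        rw [this, hcyc]
      rw [heq]
      exact hsub.image _
    exact absurd (hIccss (Set.left_mem_Icc.2 hab.le) (Set.right_mem_Icc.2 hab.le)) hab.ne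
  refine ⟨⋃ i ∈ Finset.range k, {sInf (Si i), sSup (Si i)}, ?_, ?_, ?_⟩
  · apply Set.Finite.biUnion (Finset.range k).finite_toSet
    intro i _
    exact (Set.finite_singleton _).insert _
  · intro t htM htE
    rw [hMU] at htM
    obtain ⟨i, hi, hti⟩ := Set.mem_iUnion₂.1 htM
    rw [Finset.mem_range] at hi
    have htIcc : t ∈ Icc (sInf (Si i)) (sSup (Si i)) := (hSIcc i) ▸ hti
    have htne : t ≠ sInf (Si i) ∧ t ≠ sSup (Si i) := by
      constructor <;> intro h <;> apply htE <;>
        exact Set.mem_iUnion₂.2 ⟨i, Finset.mem_range.2 hi, by simp [h]⟩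
    refine ⟨sInf (Si i), sSup (Si i),
      lt_of_le_of_ne htIcc.1 (Ne.symm htne.1), lt_of_le_of_ne htIcc.2 htne.2, ?_⟩
    intro w hw
    exact hSM i hi ((hSIcc i).symm ▸ (Set.Ioo_subset_Icc_self hw))
  · intro t htM δ hδ
    rw [hMU] at htM
    obtain ⟨i, hi, hti⟩ := Set.mem_iUnion₂.1 htM
    rw [Finset.mem_range] at hi
    set c := sInf (Si i) with hc
    set d := sSup (Si i) with hd
    have htIcc : t ∈ Icc c d := (hSIcc i) ▸ hti
    have hcd : c < d := hSnd i hi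
    have hIooM : Ioo c d ⊆ Mr := fun w hw =>
      hSM i hi ((hSIcc i).symm ▸ (Set.Ioo_subset_Icc_self hw))
    by_cases hcase : t < d
    · set u := min d (t + δ) with hu
      have htu : t < u := lt_min hcase (by linarith)
      obtain ⟨lq, hl1, hl2⟩ := exists_rat_btwn htu
      obtain ⟨rq, hr1, hr2⟩ := exists_rat_btwn hl2
      refine ⟨lq, rq, hr1, ?_, ?_⟩
      · intro w hw
        apply hIooM
        constructor
        · calc c ≤ t := htIcc.1
            _ < lq := hl1
            _ < w := hw.1
        · calc w < rq := hw.2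
            _ < u := hr2
            _ ≤ d := min_le_left _ _
      · intro w hw
        rw [Metric.mem_ball, Real.dist_eq]
        have h1 : t < w := lt_trans hl1 hw.1
        have h2 : w < t + δ := lt_of_lt_of_le (lt_trans hw.2 hr2) (min_le_right _ _)
        rw [abs_sub_lt_iff]
        constructor <;> linarith
    · push_neg at hcase
      have htd : t = d := le_antisymm htIcc.2 hcase
      have hct : c < t := htd ▸ hcd
      set u := max c (t - δ) with hu
      have htu : u < t := max_lt hct (by linarith)
      obtain ⟨lq, hl1, hl2⟩ := exists_rat_btwn htu
      obtain ⟨rq, hr1, hr2⟩ := exists_rat_btwn hl2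
      refine ⟨lq, rq, hr1, ?_, ?_⟩
      · intro w hw
        apply hIooM
        constructor
        · calc c ≤ u := le_max_left _ _
            _ < lq := hl1
            _ < w := hw.1
        · calc w < rq := hw.2
            _ < t := hr2
            _ ≤ d := htIcc.2
      · intro w hw
        rw [Metric.mem_ball, Real.dist_eq]
        have h1 : w < t := lt_trans hw.2 hr2
        have h2 : t - δ ≤ u := le_max_right _ _
        have h3 : u < w := lt_trans hl1 hw.1
        rw [abs_sub_lt_iff]
        constructor <;> linarith


theorem stmt13 (f : unitInterval → unitInterval) (hf : Continuous f)
    (M : Set unitInterval) (k : ℕ) (hM : IsTransitiveCycle f M k)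
    (x : unitInterval) (hinf : (sAlpha f x ∩ M).Infinite) :
    x ∈ M ∧ M ⊆ sAlpha f x := by
  classical
  obtain ⟨⟨hk, K, ⟨a, b, hab, hK⟩, hdisj, hcyc, hMU⟩, hmaps, htrans⟩ := hM
  set G : ℝ → ℝ := gR f with hGdef
  have hGc : Continuous G := gR_cont hf
  set Mr : Set ℝ := Subtype.val '' M with hMrdef
  -- `K` as a real interval
  have hKval : Subtype.val '' K = Icc (a:ℝ) (b:ℝ) := by
    rw [hK]
    ext t
    simp only [Set.mem_image, Set.mem_Icc]
    constructor
    · rintro ⟨w, ⟨hw1, hw2⟩, rfl⟩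
      exact ⟨Subtype.coe_le_coe.2 hw1, Subtype.coe_le_coe.2 hw2⟩
    · intro ht
      have ht0 : t ∈ Icc (0:ℝ) 1 :=
        ⟨le_trans a.2.1 ht.1, le_trans ht.2 b.2.2⟩
      exact ⟨⟨t, ht0⟩, ⟨Subtype.coe_le_coe.1 ht.1, Subtype.coe_le_coe.1 ht.2⟩, rfl⟩
  have habR : (a:ℝ) < (b:ℝ) := hab
  -- `Mr` as a union of images of the real interval
  have hMreq : Mr = ⋃ i ∈ Finset.range k, G^[i] '' (Icc (a:ℝ) (b:ℝ)) := by
    rw [hMrdef, hMU, Set.image_iUnion₂]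
    refine Set.iUnion₂_congr (fun i _ => ?_)
    rw [← hKval]
    exact (gR_image f i K).symm
  have hcycR : G^[k] '' (Icc (a:ℝ) (b:ℝ)) = Icc (a:ℝ) (b:ℝ) := by
    rw [← hKval]
    have h := gR_image f k K
    rw [hcyc] at h
    exact h
  -- basic facts about Mr
  have hsubR : Mr ⊆ Icc (0:ℝ) 1 := by
    rintro _ ⟨w, _, rfl⟩
    exact w.2
  have hmapsR : ∀ t ∈ Mr, G t ∈ Mr := by
    rintro _ ⟨w, hw, rfl⟩
    rw [hGdef, gR_val]
    exact ⟨f w, hmaps hw, rfl⟩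
  have hMrcomp : IsCompact Mr := by
    rw [hMreq]
    exact Set.Finite.isCompact_biUnion (Finset.range k).finite_toSet
      (fun i _ => isCompact_Icc.image (hGc.iterate i))
  have htransR : ∀ U V : Set ℝ, IsOpen U → IsOpen V → (U ∩ Mr).Nonempty → (V ∩ Mr).Nonempty →
      ∃ n : ℕ, (G^[n] '' (U ∩ Mr) ∩ V).Nonempty := by
    intro U V hU hV hUne hVne
    obtain ⟨t, htU, w, hwM, rfl⟩ := hUne
    obtain ⟨t', htV, w', hw'M, rfl⟩ := hVne
    have hUs : ((Subtype.val ⁻¹' U : Set unitInterval) ∩ M).Nonempty := ⟨w, htU, hwM⟩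
    have hVs : ((Subtype.val ⁻¹' V : Set unitInterval) ∩ M).Nonempty := ⟨w', htV, hw'M⟩
    obtain ⟨n, y, hy1, hy2⟩ := htrans _ _ (hU.preimage continuous_subtype_val)
      (hV.preimage continuous_subtype_val) hUs hVs
    obtain ⟨w'', hw'', rfl⟩ := hy1
    refine ⟨n, ↑(f^[n] w''), ⟨↑w'', ⟨hw''.1, ⟨w'', hw''.2, rfl⟩⟩, ?_⟩, hy2⟩
    rw [hGdef]
    exact gR_iter_val f n w''
  -- interval structure of Mr
  obtain ⟨E, hEfin, hEloc1, hloc⟩ := struct_loc hGc habR hk hcycR hMreq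
  -- preimages of x inside M
  set PreM : Set unitInterval := {w | w ∈ M ∧ ∃ n, f^[n] w = x} with hPreM
  have hEfin' : ((Subtype.val ⁻¹' E) : Set unitInterval).Finite :=
    hEfin.preimage (Set.injOn_of_injective Subtype.val_injective)
  have hkey : ∀ y, y ∈ sAlpha f x ∩ M → (y:ℝ) ∉ E → x ∈ M ∧ y ∈ closure PreM := by
    intro y hy hyE
    obtain ⟨c, d, hc, hd, hIoo⟩ := hEloc1 (↑y) ⟨y, hy.2, rfl⟩ hyE
    set O : Set unitInterval := Subtype.val ⁻¹' (Ioo c d) with hO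
    have hOopen : IsOpen O := isOpen_Ioo.preimage continuous_subtype_val
    have hOM : O ⊆ M := by
      intro w hw
      obtain ⟨w', hw', hww⟩ := hIoo hw
      rwa [← Subtype.val_injective hww]
    have hyO : y ∈ O := ⟨hc, hd⟩
    obtain ⟨u, ⟨hu0, hustep⟩, hclus⟩ := hy.1
    have hiter : ∀ n, f^[n] (u n) = x := by
      intro n
      induction n with
      | zero => simpa using hu0
      | succ n ih => rw [Function.iterate_succ_apply, hustep, ih]
    constructor
    · obtain ⟨n, hn⟩ := ((mapClusterPt_iff_frequently.1 hclus) O (hOopen.mem_nhds hyO)).exists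
      rw [← hiter n]
      exact (hmaps.iterate n) (hOM hn)
    · rw [mem_closure_iff_nhds]
      intro N hN
      obtain ⟨n, hn⟩ :=
        ((mapClusterPt_iff_frequently.1 hclus) (N ∩ O) (Filter.inter_mem hN (hOopen.mem_nhds hyO))).exists
      exact ⟨u n, hn.1, hOM hn.2, n, hiter n⟩
  have hexy : ((sAlpha f x ∩ M) \ (Subtype.val ⁻¹' E)).Nonempty :=
    (hinf.diff hEfin').nonempty
  obtain ⟨y₀, hy₀, hy₀E⟩ := hexy
  have hxM : x ∈ M := (hkey y₀ hy₀ hy₀E).1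
  refine ⟨hxM, ?_⟩
  -- PreM is infinite
  have hPreInf : PreM.Infinite := by
    by_contra hfin
    rw [Set.not_infinite] at hfin
    have hclosed : IsClosed PreM := hfin.isClosed
    have hsub2 : (sAlpha f x ∩ M) \ (Subtype.val ⁻¹' E) ⊆ PreM := by
      intro y hy
      have h := (hkey y hy.1 hy.2).2
      rwa [hclosed.closure_eq] at h
    exact (Set.Infinite.mono hsub2 (hinf.diff hEfin')) hfin
  have hPreR : {t | t ∈ Mr ∧ ∃ n, G^[n] t = ((x:ℝ))}.Infinite := by
    refine Set.Infinite.mono ?_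
      (hPreInf.image (Set.injOn_of_injective Subtype.val_injective))
    rintro _ ⟨w, ⟨hwM, n, hwn⟩, rfl⟩
    refine ⟨⟨w, hwM, rfl⟩, n, ?_⟩
    rw [hGdef, gR_iter_val, hwn]
  -- the master backward chain
  obtain ⟨P, S, hSmono, hPmem, hP0, hchain, hdens⟩ :=
    rmain hGc hMrcomp hsubR hmapsR htransR hloc ((x:ℝ)) hPreR
  -- build the backward branch
  have hPunit : ∀ t, P t ∈ Icc (0:ℝ) 1 := fun t => hsubR (hPmem t)
  set Ph : ℕ → unitInterval := fun t => ⟨P t, hPunit t⟩ with hPh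
  have hSub2 : ∀ n : ℕ, ∃ t, n ≤ S t := fun n => ⟨n, hSmono.le_apply⟩
  set τ : ℕ → ℕ := fun n => Nat.find (hSub2 n) with hτdef
  have hτspec : ∀ n, n ≤ S (τ n) := fun n => Nat.find_spec (hSub2 n)
  set u : ℕ → unitInterval := fun n => f^[S (τ n) - n] (Ph (τ n)) with hu
  have huval : ∀ n, ((u n : ℝ)) = G^[S (τ n) - n] (P (τ n)) := by
    intro n
    rw [hu, hGdef]
    exact (gR_iter_val f _ (Ph (τ n))).symm
  have hτ0 : τ 0 = 0 := by
    rw [hτdef]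
    exact (Nat.find_eq_zero _).2 (Nat.zero_le _)
  have hτle : ∀ n, τ n ≤ τ (n+1) := by
    intro n
    exact Nat.find_min' (hSub2 n) (le_trans (Nat.le_succ n) (hτspec (n+1)))
  have hτle2 : ∀ n, τ (n+1) ≤ τ n + 1 := by
    intro n
    apply Nat.find_min' (hSub2 (n+1))
    have h1 : S (τ n) < S (τ n + 1) := hSmono (Nat.lt_succ_self _)
    have h2 : n ≤ S (τ n) := hτspec n
    omega
  have hbranch : IsBackwardBranch f x u := by
    constructor
    · apply Subtype.val_injective
      rw [huval 0, hτ0]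
      simpa using hP0
    · intro n
      apply Subtype.val_injective
      have hfval : ((f (u (n+1)) : ℝ)) = G ((u (n+1) : ℝ)) := (gR_val f _).symm
      rw [hfval, huval (n+1), huval n]
      by_cases hcase : τ (n+1) = τ n
      · rw [hcase]
        have h1 : n + 1 ≤ S (τ n) := by
          have h2 := hτspec (n+1)
          rwa [hcase] at h2
        calc G (G^[S (τ n) - (n + 1)] (P (τ n)))
            = G^[S (τ n) - (n+1) + 1] (P (τ n)) := (Function.iterate_succ_apply' G _ _).symm
          _ = G^[S (τ n) - n] (P (τ n)) := by congr 1; omega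
      · have hτeq : τ (n+1) = τ n + 1 := by
          have h1 := hτle n
          have h2 := hτle2 n
          omega
        have hSτn : S (τ n) = n := by
          have h1 : ¬ (n + 1 ≤ S (τ n)) :=
            Nat.find_min (hSub2 (n+1)) (show τ n < τ (n+1) by omega)
          have h2 : n ≤ S (τ n) := hτspec n
          omega
        rw [hτeq]
        have e1 : S (τ n) - n = 0 := by omega
        rw [e1]
        simp only [Function.iterate_zero, id_eq]
        have e2 : S (τ n + 1) - (n + 1) + 1 = S (τ n + 1) - S (τ n) := by
          have h3 : S (τ n) < S (τ n + 1) := hSmono (Nat.lt_succ_self _)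
          omega
        calc G (G^[S (τ n + 1) - (n + 1)] (P (τ n + 1)))
            = G^[S (τ n + 1) - (n + 1) + 1] (P (τ n + 1)) :=
              (Function.iterate_succ_apply' G _ _).symm
          _ = G^[S (τ n + 1) - S (τ n)] (P (τ n + 1)) := by rw [e2]
          _ = P (τ n) := hchain (τ n)
  have huS : ∀ t, u (S t) = Ph t := by
    intro t
    have hτSt : τ (S t) = t := by
      apply le_antisymm
      · exact Nat.find_min' (hSub2 (S t)) le_rfl
      · by_contra hcon
        push_neg at hcon
        have h1 : S (τ (S t)) < S t := hSmono hcon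
        have h2 := hτspec (S t)
        omega
    show f^[S (τ (S t)) - S t] (Ph (τ (S t))) = Ph t
    rw [hτSt]
    simp
  -- now every point of M is a cluster point of u
  intro z hz
  set C : Set unitInterval := {y | MapClusterPt y atTop u} with hC
  have hCclosed : IsClosed C := isClosed_setOf_clusterPt
  have hCsub : C ⊆ sAlpha f x := fun y hy => ⟨u, hbranch, hy⟩
  have hzC : z ∈ closure C := by
    rw [Metric.mem_closure_iff]
    intro ε hε
    have hzMr : ((z:ℝ)) ∈ Mr := ⟨z, hz, rfl⟩
    have hset : {t : ℕ | |P t - ((z:ℝ))| ≤ ε/2}.Infinite := hdens _ hzMr (ε/2) (by linarith)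
    have hgt : ∀ N : ℕ, ∃ t, t ∈ {t : ℕ | |P t - ((z:ℝ))| ≤ ε/2} ∧ N < t := by
      intro N
      obtain ⟨t, ht1, ht2⟩ := hset.exists_gt N
      exact ⟨t, ht1, ht2⟩
    choose nxt hnxt1 hnxt2 using hgt
    set tse : ℕ → ℕ := fun m => Nat.rec (nxt 0) (fun _ prev => nxt prev) m with htse
    have htsemem : ∀ m, |P (tse m) - ((z:ℝ))| ≤ ε/2 := by
      intro m
      cases m with
      | zero => exact hnxt1 0
      | succ m => exact hnxt1 (tse m)
    have htsemono : StrictMono tse := strictMono_nat_of_lt_succ (fun m => hnxt2 (tse m))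
    set sC : Set ℝ := Mr ∩ Metric.closedBall ((z:ℝ)) (ε/2) with hsC
    have hsCcomp : IsCompact sC := hMrcomp.inter_right Metric.isClosed_closedBall
    have hmem2 : ∀ m, P (tse m) ∈ sC := by
      intro m
      refine ⟨hPmem _, ?_⟩
      rw [Metric.mem_closedBall, Real.dist_eq]
      exact htsemem m
    obtain ⟨x₀, hx₀s, φ, hφ, hconv⟩ := hsCcomp.tendsto_subseq hmem2
    have hx₀unit : x₀ ∈ Icc (0:ℝ) 1 := hsubR hx₀s.1
    set xh : unitInterval := ⟨x₀, hx₀unit⟩ with hxh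
    have hconv2 : Tendsto (fun m => Ph (tse (φ m))) atTop (𝓝 xh) := by
      rw [tendsto_subtype_rng]
      exact hconv
    set ψ : ℕ → ℕ := fun m => S (tse (φ m)) with hψ
    have hψmono : StrictMono ψ := hSmono.comp (htsemono.comp hφ)
    have hclus2 : MapClusterPt xh atTop u := by
      apply MapClusterPt.of_comp (φ := ψ) hψmono.tendsto_atTop
      have : (u ∘ ψ) = fun m => Ph (tse (φ m)) := by
        funext m
        exact huS _
      rw [this]
      exact hconv2.mapClusterPt
    refine ⟨xh, hclus2, ?_⟩
    rw [Subtype.dist_eq]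
    have : dist x₀ ((z:ℝ)) ≤ ε/2 := hx₀s.2
    rw [dist_comm] at this
    calc dist ((z:ℝ)) x₀ ≤ ε/2 := this
      _ < ε := by linarith
  have hzC' : z ∈ C := by
    rwa [hCclosed.closure_eq] at hzC
  exact hCsub hzC'
end

section
/- Fix strictly decreasing sequences 1 = a₁ > b₁ > a₂ > b₂ > ⋯ converging to 0, and let f : [0,1] → [0,1] be the continuous map with f(0) = 0, f(a_i) = a_i, f(b_i) = a_{i+2} for all i, and linear on each interval [a_{i+1}, b_i] and [b_i, a_i]. Then sα(x) = {a₁, …, a_n} for every x ∈ (a_{n+1}, a_n], and sα(0) = {0}. In particular, f has a strictly increasing sequence of special α-limit sets not contained in any maximal special α-limit set. -/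
open Filter Topology Set

/-- `z` lies in the band `(a (m+1), a m]`. -/
def InBand (a : ℕ → unitInterval) (m : ℕ) (z : unitInterval) : Prop :=
  a (m + 1) < z ∧ z ≤ a m

lemma clusterPt_eq_of_tendsto {X : Type*} [TopologicalSpace X] [T2Space X]
    {u : ℕ → X} {y L : X} (h : MapClusterPt y atTop u)
    (hL : Tendsto u atTop (𝓝 L)) : y = L :=
  eq_of_nhds_neBot (h.clusterPt.mono hL)

section Aux
variable {f : unitInterval → unitInterval} {a b : ℕ → unitInterval}

lemma aux_anti (horder : ∀ i, 1 ≤ i → a (i + 1) < b i ∧ b i < a i) :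
    ∀ i j, 1 ≤ i → i < j → a j < a i := by
  intro i j hi hij
  induction j with
  | zero => omega
  | succ k ih =>
    have hk : a (k+1) < a k := lt_trans (horder k (by omega)).1 (horder k (by omega)).2
    rcases Nat.lt_or_ge i k with h | h
    · exact lt_trans hk (ih h)
    · have : i = k := by omega
      subst this; exact hk

lemma aux_anti_le (horder : ∀ i, 1 ≤ i → a (i + 1) < b i ∧ b i < a i) :
    ∀ i j, 1 ≤ i → i ≤ j → a j ≤ a i := by
  intro i j hi hij
  rcases Nat.lt_or_ge i j with h | h
  · exact le_of_lt (aux_anti horder i j hi h)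
  · have : i = j := by omega
    subst this; exact le_refl _

lemma aux_apos (horder : ∀ i, 1 ≤ i → a (i + 1) < b i ∧ b i < a i) :
    ∀ i, 1 ≤ i → (0:ℝ) < a i := fun i hi =>
  lt_of_le_of_lt (b i).2.1 (by exact_mod_cast (horder i hi).2)

lemma aux_bpos (horder : ∀ i, 1 ≤ i → a (i + 1) < b i ∧ b i < a i) :
    ∀ i, 1 ≤ i → (0:ℝ) < b i := fun i hi =>
  lt_of_le_of_lt (a (i+1)).2.1 (by exact_mod_cast (horder i hi).1)

end Aux

section Aux2
variable {f : unitInterval → unitInterval} {a b : ℕ → unitInterval}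

/-- On the interval `[a (m+1), a m]`, `f` maps into `[a (m+2), a m]`. -/
lemma aux_range (horder : ∀ i, 1 ≤ i → a (i + 1) < b i ∧ b i < a i)
    (hlin1 : ∀ i, 1 ≤ i → ∀ x : unitInterval, a (i + 1) ≤ x → x ≤ b i →
      (f x : ℝ) = (a (i + 1) : ℝ) +
        (((a (i + 2) : ℝ) - (a (i + 1) : ℝ)) / ((b i : ℝ) - (a (i + 1) : ℝ))) *
          ((x : ℝ) - (a (i + 1) : ℝ)))
    (hlin2 : ∀ i, 1 ≤ i → ∀ x : unitInterval, b i ≤ x → x ≤ a i →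
      (f x : ℝ) = (a (i + 2) : ℝ) +
        (((a i : ℝ) - (a (i + 2) : ℝ)) / ((a i : ℝ) - (b i : ℝ))) *
          ((x : ℝ) - (b i : ℝ)))
    {m : ℕ} (hm : 1 ≤ m) {z : unitInterval} (hl : a (m+1) ≤ z) (hr : z ≤ a m) :
    (a (m+2) : ℝ) ≤ f z ∧ (f z : ℝ) ≤ a m := by
  have hab : (a (m+1) : ℝ) < b m := by exact_mod_cast (horder m hm).1
  have hba : (b m : ℝ) < a m := by exact_mod_cast (horder m hm).2
  have ha2 : (a (m+2) : ℝ) < a (m+1) := by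
    exact_mod_cast aux_anti horder (m+1) (m+2) (by omega) (by omega)
  rcases le_total z (b m) with hzb | hbz
  · rw [hlin1 m hm z hl hzb]
    have hzb' : (z : ℝ) ≤ b m := by exact_mod_cast hzb
    have hl' : (a (m+1) : ℝ) ≤ z := by exact_mod_cast hl
    set s : ℝ := ((a (m + 2) : ℝ) - (a (m + 1) : ℝ)) / ((b m : ℝ) - (a (m + 1) : ℝ)) with hs
    have hsneg : s ≤ 0 := div_nonpos_iff.mpr (Or.inr ⟨by linarith, by linarith⟩)
    have hkey : s * ((b m : ℝ) - (a (m+1) : ℝ)) = (a (m+2) : ℝ) - (a (m+1) : ℝ) :=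
      div_mul_cancel₀ _ (by linarith)
    have h1 : s * ((z : ℝ) - (a (m+1) : ℝ)) ≤ 0 :=
      mul_nonpos_iff.mpr (Or.inr ⟨hsneg, by linarith⟩)
    have h2 : s * ((b m : ℝ) - (a (m+1) : ℝ)) ≤ s * ((z : ℝ) - (a (m+1) : ℝ)) :=
      mul_le_mul_of_nonpos_left (by linarith) hsneg
    constructor <;> linarith
  · rw [hlin2 m hm z hbz hr]
    have hbz' : (b m : ℝ) ≤ z := by exact_mod_cast hbz
    have hr' : (z : ℝ) ≤ a m := by exact_mod_cast hr
    set s : ℝ := ((a m : ℝ) - (a (m + 2) : ℝ)) / ((a m : ℝ) - (b m : ℝ)) with hs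
    have hspos : 0 ≤ s := div_nonneg (by linarith) (by linarith)
    have hkey : s * ((a m : ℝ) - (b m : ℝ)) = (a m : ℝ) - (a (m+2) : ℝ) :=
      div_mul_cancel₀ _ (by linarith)
    have h1 : 0 ≤ s * ((z : ℝ) - (b m : ℝ)) := mul_nonneg hspos (by linarith)
    have h2 : s * ((z : ℝ) - (b m : ℝ)) ≤ s * ((a m : ℝ) - (b m : ℝ)) :=
      mul_le_mul_of_nonneg_left (by linarith) hspos
    constructor <;> linarith

end Aux2
section Aux3
variable {f : unitInterval → unitInterval} {a b : ℕ → unitInterval}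

/-- In-band preimages contract (exactly) towards the fixed point `a m`. -/
lemma aux_contract (horder : ∀ i, 1 ≤ i → a (i + 1) < b i ∧ b i < a i)
    (hlin1 : ∀ i, 1 ≤ i → ∀ x : unitInterval, a (i + 1) ≤ x → x ≤ b i →
      (f x : ℝ) = (a (i + 1) : ℝ) +
        (((a (i + 2) : ℝ) - (a (i + 1) : ℝ)) / ((b i : ℝ) - (a (i + 1) : ℝ))) *
          ((x : ℝ) - (a (i + 1) : ℝ)))
    (hlin2 : ∀ i, 1 ≤ i → ∀ x : unitInterval, b i ≤ x → x ≤ a i →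
      (f x : ℝ) = (a (i + 2) : ℝ) +
        (((a i : ℝ) - (a (i + 2) : ℝ)) / ((a i : ℝ) - (b i : ℝ))) *
          ((x : ℝ) - (b i : ℝ)))
    {m : ℕ} (hm : 1 ≤ m) {x y : unitInterval} (hfy : f y = x)
    (hx : InBand a m x) (hy : InBand a m y) :
    ((a m : ℝ) - y) * ((a m : ℝ) - (a (m+2) : ℝ)) =
      ((a m : ℝ) - x) * ((a m : ℝ) - (b m : ℝ)) := by
  have hab : (a (m+1) : ℝ) < b m := by exact_mod_cast (horder m hm).1
  have hba : (b m : ℝ) < a m := by exact_mod_cast (horder m hm).2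
  have ha2 : (a (m+2) : ℝ) < a (m+1) := by
    exact_mod_cast aux_anti horder (m+1) (m+2) (by omega) (by omega)
  have hx1 : (a (m+1) : ℝ) < x := by exact_mod_cast hx.1
  have hy1 : (a (m+1) : ℝ) < y := by exact_mod_cast hy.1
  have hy2 : (y : ℝ) ≤ a m := by exact_mod_cast hy.2
  -- first, `b m < y`
  have hby : b m < y := by
    by_contra hc
    push_neg at hc
    have hc' : (y : ℝ) ≤ b m := by exact_mod_cast hc
    have := hlin1 m hm y (le_of_lt hy.1) hc
    rw [hfy] at this
    set s : ℝ := ((a (m + 2) : ℝ) - (a (m + 1) : ℝ)) / ((b m : ℝ) - (a (m + 1) : ℝ)) with hs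
    have hsneg : s ≤ 0 := div_nonpos_iff.mpr (Or.inr ⟨by linarith, by linarith⟩)
    have h1 : s * ((y : ℝ) - (a (m+1) : ℝ)) ≤ 0 :=
      mul_nonpos_iff.mpr (Or.inr ⟨hsneg, by linarith⟩)
    linarith
  have hby' : (b m : ℝ) ≤ y := by exact_mod_cast le_of_lt hby
  have := hlin2 m hm y (le_of_lt hby) hy.2
  rw [hfy] at this
  have hne : (a m : ℝ) - b m ≠ 0 := by linarith
  field_simp at this
  nlinarith [this]

/-- Existence of preimages in `[b m, a m]` for points of `[a (m+2), a m]`. -/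
lemma aux_exist (horder : ∀ i, 1 ≤ i → a (i + 1) < b i ∧ b i < a i)
    (hlin2 : ∀ i, 1 ≤ i → ∀ x : unitInterval, b i ≤ x → x ≤ a i →
      (f x : ℝ) = (a (i + 2) : ℝ) +
        (((a i : ℝ) - (a (i + 2) : ℝ)) / ((a i : ℝ) - (b i : ℝ))) *
          ((x : ℝ) - (b i : ℝ)))
    {m : ℕ} (hm : 1 ≤ m) {z : unitInterval}
    (hl : (a (m+2) : ℝ) ≤ z) (hr : z ≤ a m) :
    ∃ y : unitInterval, b m ≤ y ∧ y ≤ a m ∧ f y = z := by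
  have hab : (a (m+1) : ℝ) < b m := by exact_mod_cast (horder m hm).1
  have hba : (b m : ℝ) < a m := by exact_mod_cast (horder m hm).2
  have ha2 : (a (m+2) : ℝ) < a (m+1) := by
    exact_mod_cast aux_anti horder (m+1) (m+2) (by omega) (by omega)
  have hr' : (z : ℝ) ≤ a m := by exact_mod_cast hr
  set ρ : ℝ := ((a m : ℝ) - (b m : ℝ)) / ((a m : ℝ) - (a (m+2) : ℝ)) with hρ
  have hρpos : 0 < ρ := div_pos (by linarith) (by linarith)
  set yr : ℝ := (b m : ℝ) + ((z : ℝ) - (a (m+2) : ℝ)) * ρ with hyr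
  have hge : (b m : ℝ) ≤ yr := by
    have : 0 ≤ ((z : ℝ) - (a (m+2) : ℝ)) * ρ := mul_nonneg (by linarith) (le_of_lt hρpos)
    linarith
  have hle : yr ≤ a m := by
    have h1 : ((z : ℝ) - (a (m+2) : ℝ)) * ρ ≤ ((a m : ℝ) - (a (m+2) : ℝ)) * ρ :=
      mul_le_mul_of_nonneg_right (by linarith) (le_of_lt hρpos)
    have h2 : ((a m : ℝ) - (a (m+2) : ℝ)) * ρ = (a m : ℝ) - b m := by
      rw [hρ, mul_comm]; exact div_mul_cancel₀ _ (by linarith)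
    linarith
  have hmem : yr ∈ Set.Icc (0:ℝ) 1 := by
    constructor
    · exact le_trans (b m).2.1 hge
    · exact le_trans hle (a m).2.2
  refine ⟨⟨yr, hmem⟩, ?_, ?_, ?_⟩
  · exact_mod_cast hge
  · exact_mod_cast hle
  · have hb : b m ≤ (⟨yr, hmem⟩ : unitInterval) := by exact_mod_cast hge
    have ha : (⟨yr, hmem⟩ : unitInterval) ≤ a m := by exact_mod_cast hle
    have := hlin2 m hm ⟨yr, hmem⟩ hb ha
    apply Subtype.ext
    rw [this]
    show (a (m+2) : ℝ) + ((a m : ℝ) - (a (m+2) : ℝ)) / ((a m : ℝ) - (b m : ℝ)) *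
      (yr - (b m : ℝ)) = z
    have hsρ : ((a m : ℝ) - (a (m+2) : ℝ)) / ((a m : ℝ) - (b m : ℝ)) * ρ = 1 := by
      rw [hρ]
      have hne1 : (a m : ℝ) - (b m : ℝ) ≠ 0 := by linarith
      have hne2 : (a m : ℝ) - (a (m+2) : ℝ) ≠ 0 := by linarith
      field_simp
    have hd : yr - (b m : ℝ) = ((z : ℝ) - (a (m+2) : ℝ)) * ρ := by rw [hyr]; ring
    rw [hd, show ((a m : ℝ) - (a (m+2) : ℝ)) / ((a m : ℝ) - (b m : ℝ)) *
      (((z : ℝ) - (a (m+2) : ℝ)) * ρ) = ((z : ℝ) - (a (m+2) : ℝ)) *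
      (((a m : ℝ) - (a (m+2) : ℝ)) / ((a m : ℝ) - (b m : ℝ)) * ρ) from by ring, hsρ]
    ring
end Aux3
section Aux4
variable {f : unitInterval → unitInterval} {a b : ℕ → unitInterval}

lemma aux_band_unique (horder : ∀ i, 1 ≤ i → a (i + 1) < b i ∧ b i < a i)
    {m m' : ℕ} (hm : 1 ≤ m) (hm' : 1 ≤ m') {z : unitInterval}
    (h : InBand a m z) (h' : InBand a m' z) : m = m' := by
  by_contra hne
  rcases Nat.lt_or_ge m m' with hlt | hge
  · have hle : a m' ≤ a (m+1) := aux_anti_le horder (m+1) m' (by omega) (by omega)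
    exact lt_irrefl z (lt_of_le_of_lt (h'.2.trans hle) h.1)
  · have hlt : m' < m := by omega
    have hle : a m ≤ a (m'+1) := aux_anti_le horder (m'+1) m (by omega) (by omega)
    exact lt_irrefl z (lt_of_le_of_lt (h.2.trans hle) h'.1)

lemma aux_band_ex (ha1 : a 1 = 1)
    (horder : ∀ i, 1 ≤ i → a (i + 1) < b i ∧ b i < a i)
    (hlim : Tendsto (fun i => (a i : ℝ)) atTop (nhds 0))
    {y : unitInterval} (hy : (0:ℝ) < y) : ∃ m, 1 ≤ m ∧ InBand a m y := by
  classical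
  have hex : ∃ i, 1 ≤ i ∧ (a i : ℝ) < y := by
    obtain ⟨i, hi1, hi2⟩ :=
      ((hlim.eventually (eventually_lt_nhds hy)).and (eventually_ge_atTop 1)).exists
    exact ⟨i, hi2, hi1⟩
  set m' := Nat.find hex with hm'
  have hspec : 1 ≤ m' ∧ (a m' : ℝ) < y := Nat.find_spec hex
  have hm'2 : 2 ≤ m' := by
    rcases Nat.lt_or_ge m' 2 with h | h
    · interval_cases m'
      · exact absurd hspec.1 (by omega)
      · exfalso
        have := hspec.2
        rw [ha1] at this
        exact absurd y.2.2 (not_le.mpr (by exact_mod_cast this))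
    · exact h
  refine ⟨m' - 1, by omega, ?_, ?_⟩
  · show a (m' - 1 + 1) < y
    have : m' - 1 + 1 = m' := by omega
    rw [this]
    exact_mod_cast hspec.2
  · show y ≤ a (m' - 1)
    have hnot : ¬ (1 ≤ m' - 1 ∧ (a (m' - 1) : ℝ) < y) := Nat.find_min hex (by omega)
    push_neg at hnot
    have := hnot (by omega)
    exact_mod_cast this

lemma aux_fpos (ha1 : a 1 = 1)
    (horder : ∀ i, 1 ≤ i → a (i + 1) < b i ∧ b i < a i)
    (hlim : Tendsto (fun i => (a i : ℝ)) atTop (nhds 0))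
    (hlin1 : ∀ i, 1 ≤ i → ∀ x : unitInterval, a (i + 1) ≤ x → x ≤ b i →
      (f x : ℝ) = (a (i + 1) : ℝ) +
        (((a (i + 2) : ℝ) - (a (i + 1) : ℝ)) / ((b i : ℝ) - (a (i + 1) : ℝ))) *
          ((x : ℝ) - (a (i + 1) : ℝ)))
    (hlin2 : ∀ i, 1 ≤ i → ∀ x : unitInterval, b i ≤ x → x ≤ a i →
      (f x : ℝ) = (a (i + 2) : ℝ) +
        (((a i : ℝ) - (a (i + 2) : ℝ)) / ((a i : ℝ) - (b i : ℝ))) *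
          ((x : ℝ) - (b i : ℝ)))
    {y : unitInterval} (hy : (0:ℝ) < y) : (0:ℝ) < f y := by
  obtain ⟨m, hm, hband⟩ := aux_band_ex ha1 horder hlim hy
  have := (aux_range horder hlin1 hlin2 hm (le_of_lt hband.1) hband.2).1
  have hpos := aux_apos horder (m+2) (by omega)
  linarith

/-- Preimages of points in band `n` lie in some band `m ≤ n`. -/
lemma aux_preim (ha1 : a 1 = 1)
    (horder : ∀ i, 1 ≤ i → a (i + 1) < b i ∧ b i < a i)
    (hlim : Tendsto (fun i => (a i : ℝ)) atTop (nhds 0))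
    (hf0 : f 0 = 0)
    (hlin1 : ∀ i, 1 ≤ i → ∀ x : unitInterval, a (i + 1) ≤ x → x ≤ b i →
      (f x : ℝ) = (a (i + 1) : ℝ) +
        (((a (i + 2) : ℝ) - (a (i + 1) : ℝ)) / ((b i : ℝ) - (a (i + 1) : ℝ))) *
          ((x : ℝ) - (a (i + 1) : ℝ)))
    (hlin2 : ∀ i, 1 ≤ i → ∀ x : unitInterval, b i ≤ x → x ≤ a i →
      (f x : ℝ) = (a (i + 2) : ℝ) +
        (((a i : ℝ) - (a (i + 2) : ℝ)) / ((a i : ℝ) - (b i : ℝ))) *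
          ((x : ℝ) - (b i : ℝ)))
    {n : ℕ} (hn : 1 ≤ n) {x y : unitInterval} (hx : InBand a n x) (hfy : f y = x) :
    ∃ m, 1 ≤ m ∧ m ≤ n ∧ InBand a m y := by
  have hxpos : (0:ℝ) < x :=
    lt_of_le_of_lt (aux_apos horder (n+1) (by omega)).le (by exact_mod_cast hx.1)
  have hypos : (0:ℝ) < y := by
    rcases lt_or_eq_of_le y.2.1 with h | h
    · exact h
    · exfalso
      have : y = 0 := Subtype.ext h.symm
      rw [this, hf0] at hfy
      rw [← hfy] at hxpos
      exact lt_irrefl _ hxpos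
  obtain ⟨m, hm, hband⟩ := aux_band_ex ha1 horder hlim hypos
  refine ⟨m, hm, ?_, hband⟩
  by_contra hc
  push_neg at hc
  have h1 : (f y : ℝ) ≤ a m := (aux_range horder hlin1 hlin2 hm (le_of_lt hband.1) hband.2).2
  have h2 : a m ≤ a (n+1) := aux_anti_le horder (n+1) m (by omega) (by omega)
  have h3 : (a (n+1) : ℝ) < x := by exact_mod_cast hx.1
  rw [hfy] at h1
  have h2' : (a m : ℝ) ≤ a (n+1) := by exact_mod_cast h2
  linarith

end Aux4
section Aux5
variable {f : unitInterval → unitInterval} {a b : ℕ → unitInterval}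

/-- A backward branch which eventually stays in band `m` converges to `a m`. -/
lemma aux_conv (horder : ∀ i, 1 ≤ i → a (i + 1) < b i ∧ b i < a i)
    (hlin1 : ∀ i, 1 ≤ i → ∀ x : unitInterval, a (i + 1) ≤ x → x ≤ b i →
      (f x : ℝ) = (a (i + 1) : ℝ) +
        (((a (i + 2) : ℝ) - (a (i + 1) : ℝ)) / ((b i : ℝ) - (a (i + 1) : ℝ))) *
          ((x : ℝ) - (a (i + 1) : ℝ)))
    (hlin2 : ∀ i, 1 ≤ i → ∀ x : unitInterval, b i ≤ x → x ≤ a i →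
      (f x : ℝ) = (a (i + 2) : ℝ) +
        (((a i : ℝ) - (a (i + 2) : ℝ)) / ((a i : ℝ) - (b i : ℝ))) *
          ((x : ℝ) - (b i : ℝ)))
    {u : ℕ → unitInterval} (hu : ∀ k, f (u (k + 1)) = u k)
    {m K : ℕ} (hm : 1 ≤ m) (hband : ∀ k, K ≤ k → InBand a m (u k)) :
    Tendsto u atTop (𝓝 (a m)) := by
  have hab : (a (m+1) : ℝ) < b m := by exact_mod_cast (horder m hm).1
  have hba : (b m : ℝ) < a m := by exact_mod_cast (horder m hm).2
  have ha2 : (a (m+2) : ℝ) < a (m+1) := by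
    exact_mod_cast aux_anti horder (m+1) (m+2) (by omega) (by omega)
  set ρ : ℝ := ((a m : ℝ) - (b m : ℝ)) / ((a m : ℝ) - (a (m+2) : ℝ)) with hρ
  have hρ0 : 0 ≤ ρ := div_nonneg (by linarith) (by linarith)
  have hρ1 : ρ < 1 := (div_lt_one (by linarith)).mpr (by linarith)
  set d : ℕ → ℝ := fun k => (a m : ℝ) - u (K + k) with hd
  have hstep : ∀ k, d (k + 1) = d k * ρ := by
    intro k
    have h1 := aux_contract horder hlin1 hlin2 hm (hu (K + k))
      (hband (K + k) (by omega)) (hband (K + k + 1) (by omega))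
    have hne : (a m : ℝ) - (a (m+2) : ℝ) ≠ 0 := by linarith
    show (a m : ℝ) - u (K + (k+1)) = ((a m : ℝ) - u (K + k)) * ρ
    rw [hρ, mul_div_assoc', eq_div_iff hne]
    exact h1
  have hgeom : ∀ k, d k = d 0 * ρ ^ k := by
    intro k
    induction k with
    | zero => simp
    | succ k ih => rw [hstep k, ih]; ring
  have hd0 : Tendsto d atTop (𝓝 0) := by
    rw [show d = fun k => d 0 * ρ ^ k from funext hgeom]
    simpa using (tendsto_pow_atTop_nhds_zero_of_lt_one hρ0 hρ1).const_mul (d 0)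
  have htail : Tendsto (fun k => ((u (K + k) : ℝ))) atTop (𝓝 (a m)) := by
    have : (fun k => ((u (K + k) : ℝ))) = fun k => (a m : ℝ) - d k := by
      funext k; simp [hd]
    rw [this]
    simpa using tendsto_const_nhds.sub hd0
  have hcoe : Tendsto (fun k => ((u k : ℝ))) atTop (𝓝 (a m)) := by
    rw [← tendsto_add_atTop_iff_nat K]
    have : (fun k => ((u (k + K) : ℝ))) = fun k => ((u (K + k) : ℝ)) := by
      funext k; rw [Nat.add_comm]
    rw [this]; exact htail
  rw [tendsto_subtype_rng]
  exact hcoe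

end Aux5
section Aux6
variable {f : unitInterval → unitInterval} {a b : ℕ → unitInterval}

/-- From any point of band `m`, there is a preimage in band `m`. -/
lemma aux_stay (horder : ∀ i, 1 ≤ i → a (i + 1) < b i ∧ b i < a i)
    (hlin2 : ∀ i, 1 ≤ i → ∀ x : unitInterval, b i ≤ x → x ≤ a i →
      (f x : ℝ) = (a (i + 2) : ℝ) +
        (((a i : ℝ) - (a (i + 2) : ℝ)) / ((a i : ℝ) - (b i : ℝ))) *
          ((x : ℝ) - (b i : ℝ)))
    {m : ℕ} (hm : 1 ≤ m) {z : unitInterval} (hz : InBand a m z) :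
    ∃ y, InBand a m y ∧ f y = z := by
  have ha2 : (a (m+2) : ℝ) ≤ z := by
    have h1 : a (m+2) < a (m+1) := aux_anti horder (m+1) (m+2) (by omega) (by omega)
    have h2 : (a (m+1) : ℝ) < z := by exact_mod_cast hz.1
    have h1' : (a (m+2) : ℝ) < a (m+1) := by exact_mod_cast h1
    linarith
  obtain ⟨y, h1, h2, h3⟩ := aux_exist horder hlin2 hm ha2 hz.2
  exact ⟨y, ⟨lt_of_lt_of_le (horder m hm).1 h1, h2⟩, h3⟩

/-- From any point of band `m+1`, there is a preimage in band `m`. -/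
lemma aux_desc (horder : ∀ i, 1 ≤ i → a (i + 1) < b i ∧ b i < a i)
    (hlin2 : ∀ i, 1 ≤ i → ∀ x : unitInterval, b i ≤ x → x ≤ a i →
      (f x : ℝ) = (a (i + 2) : ℝ) +
        (((a i : ℝ) - (a (i + 2) : ℝ)) / ((a i : ℝ) - (b i : ℝ))) *
          ((x : ℝ) - (b i : ℝ)))
    {m : ℕ} (hm : 1 ≤ m) {z : unitInterval} (hz : InBand a (m+1) z) :
    ∃ y, InBand a m y ∧ f y = z := by
  have ha2 : (a (m+2) : ℝ) ≤ z := le_of_lt (by exact_mod_cast hz.1)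
  have hz2 : z ≤ a m := hz.2.trans (aux_anti_le horder m (m+1) hm (by omega))
  obtain ⟨y, h1, h2, h3⟩ := aux_exist horder hlin2 hm ha2 hz2
  exact ⟨y, ⟨lt_of_lt_of_le (horder m hm).1 h1, h2⟩, h3⟩

/-- There is a backward branch staying forever in band `m`. -/
lemma aux_branch_stay (horder : ∀ i, 1 ≤ i → a (i + 1) < b i ∧ b i < a i)
    (hlin2 : ∀ i, 1 ≤ i → ∀ x : unitInterval, b i ≤ x → x ≤ a i →
      (f x : ℝ) = (a (i + 2) : ℝ) +
        (((a i : ℝ) - (a (i + 2) : ℝ)) / ((a i : ℝ) - (b i : ℝ))) *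
          ((x : ℝ) - (b i : ℝ)))
    {m : ℕ} (hm : 1 ≤ m) {x : unitInterval} (hx : InBand a m x) :
    ∃ u, IsBackwardBranch f x u ∧ ∀ k, InBand a m (u k) := by
  classical
  have H : ∀ z : unitInterval, ∃ y : unitInterval, InBand a m z → InBand a m y ∧ f y = z := by
    intro z
    by_cases hz : InBand a m z
    · obtain ⟨y, hy⟩ := aux_stay horder hlin2 hm hz
      exact ⟨y, fun _ => hy⟩
    · exact ⟨z, fun hc => absurd hc hz⟩
  choose g hg using H
  have hband : ∀ k, InBand a m (g^[k] x) := by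
    intro k
    induction k with
    | zero => exact hx
    | succ k ih =>
      rw [Function.iterate_succ_apply']
      exact (hg _ ih).1
  refine ⟨fun k => g^[k] x, ⟨rfl, ?_⟩, hband⟩
  intro k
  show f (g^[k+1] x) = g^[k] x
  rw [Function.iterate_succ_apply']
  exact (hg _ (hband k)).2

end Aux6
section Aux7
variable {f : unitInterval → unitInterval} {a b : ℕ → unitInterval}

/-- From band `i + j`, there is a backward branch eventually staying in band `i`. -/
lemma aux_branch_main (horder : ∀ i, 1 ≤ i → a (i + 1) < b i ∧ b i < a i)
    (hlin2 : ∀ i, 1 ≤ i → ∀ x : unitInterval, b i ≤ x → x ≤ a i →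
      (f x : ℝ) = (a (i + 2) : ℝ) +
        (((a i : ℝ) - (a (i + 2) : ℝ)) / ((a i : ℝ) - (b i : ℝ))) *
          ((x : ℝ) - (b i : ℝ))) :
    ∀ (j i : ℕ), 1 ≤ i → ∀ x : unitInterval, InBand a (i + j) x →
    ∃ u, IsBackwardBranch f x u ∧ ∃ K, ∀ k, K ≤ k → InBand a i (u k) := by
  intro j
  induction j with
  | zero =>
    intro i hi x hx
    obtain ⟨u, hu, hband⟩ := aux_branch_stay horder hlin2 hi hx
    exact ⟨u, hu, 0, fun k _ => hband k⟩
  | succ j ih =>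
    intro i hi x hx
    obtain ⟨y, hy, hfy⟩ := aux_desc horder hlin2 (show 1 ≤ i + j by omega) hx
    obtain ⟨v, hv, K, hK⟩ := ih i hi y hy
    refine ⟨fun k => Nat.casesOn k x v, ⟨rfl, ?_⟩, K + 1, ?_⟩
    · intro k
      cases k with
      | zero => show f (v 0) = x; rw [show v 0 = y from hv.1]; exact hfy
      | succ k => show f (v (k+1)) = v k; exact hv.2 k
    · intro k hk
      cases k with
      | zero => omega
      | succ k => show InBand a i (v k); exact hK k (by omega)

end Aux7
section Aux8
variable {f : unitInterval → unitInterval} {a b : ℕ → unitInterval}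

lemma aux_sAlpha (ha1 : a 1 = 1)
    (horder : ∀ i, 1 ≤ i → a (i + 1) < b i ∧ b i < a i)
    (hlim : Tendsto (fun i => (a i : ℝ)) atTop (nhds 0))
    (hf0 : f 0 = 0)
    (hlin1 : ∀ i, 1 ≤ i → ∀ x : unitInterval, a (i + 1) ≤ x → x ≤ b i →
      (f x : ℝ) = (a (i + 1) : ℝ) +
        (((a (i + 2) : ℝ) - (a (i + 1) : ℝ)) / ((b i : ℝ) - (a (i + 1) : ℝ))) *
          ((x : ℝ) - (a (i + 1) : ℝ)))
    (hlin2 : ∀ i, 1 ≤ i → ∀ x : unitInterval, b i ≤ x → x ≤ a i →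
      (f x : ℝ) = (a (i + 2) : ℝ) +
        (((a i : ℝ) - (a (i + 2) : ℝ)) / ((a i : ℝ) - (b i : ℝ))) *
          ((x : ℝ) - (b i : ℝ)))
    {n : ℕ} (hn : 1 ≤ n) {x : unitInterval} (hx : InBand a n x) :
    sAlpha f x = {y | ∃ i, 1 ≤ i ∧ i ≤ n ∧ y = a i} := by
  ext y
  constructor
  · rintro ⟨u, ⟨hu0, hustep⟩, hcl⟩
    have H : ∀ k, ∃ p, 1 ≤ p ∧ p ≤ n ∧ InBand a p (u k) := by
      intro k
      induction k with
      | zero => exact ⟨n, hn, le_refl n, hu0 ▸ hx⟩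
      | succ k ih =>
        obtain ⟨p, hp1, hpn, hpb⟩ := ih
        obtain ⟨q, hq1, hqp, hqb⟩ :=
          aux_preim ha1 horder hlim hf0 hlin1 hlin2 hp1 hpb (hustep k)
        exact ⟨q, hq1, le_trans hqp hpn, hqb⟩
    choose mf h1 h2 h3 using H
    have hmono : ∀ k, mf (k + 1) ≤ mf k := by
      intro k
      obtain ⟨q, hq1, hqle, hqb⟩ :=
        aux_preim ha1 horder hlim hf0 hlin1 hlin2 (h1 k) (h3 k) (hustep k)
      have := aux_band_unique horder (h1 (k+1)) hq1 (h3 (k+1)) hqb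
      omega
    obtain ⟨K, hK⟩ : ∃ K, mf K = sInf (Set.range mf) :=
      Nat.sInf_mem (Set.range_nonempty mf)
    have hband : ∀ k, K ≤ k → InBand a (mf K) (u k) := by
      intro k hk
      have hle : mf k ≤ mf K := antitone_nat_of_succ_le hmono hk
      have hge : mf K ≤ mf k := hK ▸ Nat.sInf_le ⟨k, rfl⟩
      have : mf k = mf K := le_antisymm hle hge
      exact this ▸ h3 k
    have htend := aux_conv horder hlin1 hlin2 hustep (h1 K) hband
    exact ⟨mf K, h1 K, h2 K, clusterPt_eq_of_tendsto hcl htend⟩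
  · rintro ⟨i, hi1, hin, rfl⟩
    have hxband : InBand a (i + (n - i)) x := by
      rw [Nat.add_sub_cancel' hin]; exact hx
    obtain ⟨u, hu, K, hK⟩ := aux_branch_main horder hlin2 (n - i) i hi1 x hxband
    have htend := aux_conv horder hlin1 hlin2 hu.2 hi1 hK
    exact ⟨u, hu, htend.mapClusterPt⟩

end Aux8
section Aux9
variable {f : unitInterval → unitInterval} {a b : ℕ → unitInterval}

lemma aux_sAlpha0 (ha1 : a 1 = 1)
    (horder : ∀ i, 1 ≤ i → a (i + 1) < b i ∧ b i < a i)
    (hlim : Tendsto (fun i => (a i : ℝ)) atTop (nhds 0))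
    (hf0 : f 0 = 0)
    (hlin1 : ∀ i, 1 ≤ i → ∀ x : unitInterval, a (i + 1) ≤ x → x ≤ b i →
      (f x : ℝ) = (a (i + 1) : ℝ) +
        (((a (i + 2) : ℝ) - (a (i + 1) : ℝ)) / ((b i : ℝ) - (a (i + 1) : ℝ))) *
          ((x : ℝ) - (a (i + 1) : ℝ)))
    (hlin2 : ∀ i, 1 ≤ i → ∀ x : unitInterval, b i ≤ x → x ≤ a i →
      (f x : ℝ) = (a (i + 2) : ℝ) +
        (((a i : ℝ) - (a (i + 2) : ℝ)) / ((a i : ℝ) - (b i : ℝ))) *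
          ((x : ℝ) - (b i : ℝ))) :
    sAlpha f 0 = {0} := by
  ext y
  constructor
  · rintro ⟨u, ⟨hu0, hustep⟩, hcl⟩
    have hz : ∀ k, u k = 0 := by
      intro k
      induction k with
      | zero => exact hu0
      | succ k ih =>
        by_contra hne
        have hpos : (0:ℝ) < u (k+1) := by
          rcases lt_or_eq_of_le (u (k+1)).2.1 with h | h
          · exact h
          · exact absurd (Subtype.ext h.symm) hne
        have := aux_fpos ha1 horder hlim hlin1 hlin2 hpos
        rw [hustep k, ih] at this
        norm_num at this
    have huconst : u = fun _ => (0 : unitInterval) := funext hz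
    have : Tendsto u atTop (𝓝 (0 : unitInterval)) := by
      rw [huconst]; exact tendsto_const_nhds
    exact clusterPt_eq_of_tendsto hcl this
  · rintro rfl
    exact ⟨fun _ => 0, ⟨rfl, fun k => by rw [hf0]⟩,
      (tendsto_const_nhds : Tendsto (fun _ : ℕ => (0:unitInterval)) atTop (𝓝 0)).mapClusterPt⟩

end Aux9
theorem stmt16 (f : unitInterval → unitInterval) (hf : Continuous f)
    (a b : ℕ → unitInterval)
    (ha1 : a 1 = 1)
    (horder : ∀ i, 1 ≤ i → a (i + 1) < b i ∧ b i < a i)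
    (hlim : Tendsto (fun i => (a i : ℝ)) atTop (nhds 0))
    (hf0 : f 0 = 0)
    (hfa : ∀ i, 1 ≤ i → f (a i) = a i)
    (hfb : ∀ i, 1 ≤ i → f (b i) = a (i + 2))
    (hlin1 : ∀ i, 1 ≤ i → ∀ x : unitInterval, a (i + 1) ≤ x → x ≤ b i →
      (f x : ℝ) = (a (i + 1) : ℝ) +
        (((a (i + 2) : ℝ) - (a (i + 1) : ℝ)) / ((b i : ℝ) - (a (i + 1) : ℝ))) *
          ((x : ℝ) - (a (i + 1) : ℝ)))
    (hlin2 : ∀ i, 1 ≤ i → ∀ x : unitInterval, b i ≤ x → x ≤ a i →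
      (f x : ℝ) = (a (i + 2) : ℝ) +
        (((a i : ℝ) - (a (i + 2) : ℝ)) / ((a i : ℝ) - (b i : ℝ))) *
          ((x : ℝ) - (b i : ℝ))) :
    (∀ n, 1 ≤ n → ∀ x : unitInterval, a (n + 1) < x → x ≤ a n →
      sAlpha f x = {y | ∃ i, 1 ≤ i ∧ i ≤ n ∧ y = a i}) ∧
    sAlpha f 0 = {0} ∧
    (∀ n, 1 ≤ n → sAlpha f (a n) ⊂ sAlpha f (a (n + 1))) ∧
    ¬ ∃ y : unitInterval, ∀ n, 1 ≤ n → sAlpha f (a n) ⊆ sAlpha f y := by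
  have hmain : ∀ n, 1 ≤ n → ∀ x : unitInterval, a (n + 1) < x → x ≤ a n →
      sAlpha f x = {y | ∃ i, 1 ≤ i ∧ i ≤ n ∧ y = a i} := fun n hn x h1 h2 =>
    aux_sAlpha ha1 horder hlim hf0 hlin1 hlin2 hn ⟨h1, h2⟩
  have hbandself : ∀ n, 1 ≤ n → InBand a n (a n) := fun n hn =>
    ⟨lt_trans (horder n hn).1 (horder n hn).2, le_refl _⟩
  refine ⟨hmain, aux_sAlpha0 ha1 horder hlim hf0 hlin1 hlin2, ?_, ?_⟩
  · intro n hn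
    have hb := hbandself n hn
    have hb' := hbandself (n+1) (by omega)
    rw [hmain n hn (a n) hb.1 hb.2, hmain (n+1) (by omega) (a (n+1)) hb'.1 hb'.2]
    rw [Set.ssubset_def]
    constructor
    · rintro y ⟨i, hi1, hin, rfl⟩
      exact ⟨i, hi1, by omega, rfl⟩
    · intro hsub
      obtain ⟨i, hi1, hin, heq⟩ := hsub ⟨n+1, by omega, le_refl _, rfl⟩
      have hlt := aux_anti horder i (n+1) hi1 (by omega)
      rw [← heq] at hlt
      exact lt_irrefl _ hlt
  · rintro ⟨y, hy⟩
    rcases eq_or_ne y 0 with rfl | hne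
    · have hb := hbandself 1 (le_refl 1)
      have h1 : a 1 ∈ sAlpha f (a 1) := by
        rw [hmain 1 (le_refl 1) (a 1) hb.1 hb.2]
        exact ⟨1, le_refl _, le_refl _, rfl⟩
      have := hy 1 (le_refl 1) h1
      rw [aux_sAlpha0 ha1 horder hlim hf0 hlin1 hlin2] at this
      rw [Set.mem_singleton_iff, ha1] at this
      have : ((1 : unitInterval) : ℝ) = ((0 : unitInterval) : ℝ) := by rw [this]
      norm_num at this
    · have hypos : (0:ℝ) < y := by
        rcases lt_or_eq_of_le y.2.1 with h | h
        · exact h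
        · exact absurd (Subtype.ext h.symm) hne
      obtain ⟨m, hm, hband⟩ := aux_band_ex ha1 horder hlim hypos
      have hb' := hbandself (m+1) (by omega)
      have hmem : a (m+1) ∈ sAlpha f (a (m+1)) := by
        rw [hmain (m+1) (by omega) (a (m+1)) hb'.1 hb'.2]
        exact ⟨m+1, by omega, le_refl _, rfl⟩
      have hy' := hy (m+1) (by omega) hmem
      rw [hmain m hm y hband.1 hband.2] at hy'
      obtain ⟨i, hi1, him, heq⟩ := hy'
      have hlt := aux_anti horder i (m+1) hi1 (by omega)
      rw [← heq] at hlt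
      exact lt_irrefl _ hlt
end

section
/- Let f : [0,1] → [0,1] be continuous, let Orb(I₀) ⊇ Orb(I₁) ⊇ ⋯ be a nested sequence of cycles of intervals with periods tending to infinity, and let Q = ⋂_n Orb(I_n). If the α-limit set α(y) of a point y intersects Q, then y ∈ Q. -/
open Filter Topology Set

lemma cycle_fwd {f : unitInterval → unitInterval} {M : Set unitInterval} {k : ℕ}
    (h : IsIntervalCycle f M k) : ∀ x ∈ M, f x ∈ M := by
  obtain ⟨hk, K, -, -, hcyc, rfl⟩ := h
  intro x hx
  obtain ⟨i, hi, w, hw, rfl⟩ := Set.mem_iUnion₂.mp hx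
  rw [Finset.mem_range] at hi
  rcases Nat.lt_or_ge (i + 1) k with h1 | h1
  · exact Set.mem_iUnion₂.mpr ⟨i + 1, Finset.mem_range.mpr h1,
      ⟨w, hw, Function.iterate_succ_apply' f i w⟩⟩
  · have hik : i + 1 = k := by omega
    have hfx : f (f^[i] w) = f^[k] w := by
      rw [← hik]; exact (Function.iterate_succ_apply' f i w).symm
    have hK : f^[k] w ∈ K := by
      rw [← hcyc]; exact ⟨w, hw, rfl⟩
    refine Set.mem_iUnion₂.mpr ⟨0, Finset.mem_range.mpr hk, ?_⟩
    simpa [hfx] using hK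

lemma cycle_fwd_iter {f : unitInterval → unitInterval} {M : Set unitInterval} {k : ℕ}
    (h : IsIntervalCycle f M k) : ∀ (t : ℕ), ∀ x ∈ M, f^[t] x ∈ M := by
  intro t
  induction t with
  | zero => simp
  | succ t ih =>
      intro x hx
      rw [Function.iterate_succ_apply']
      exact cycle_fwd h _ (ih x hx)

lemma cycle_mul {f : unitInterval → unitInterval} {K : Set unitInterval} {k : ℕ}
    (hcyc : f^[k] '' K = K) : ∀ q : ℕ, f^[k * q] '' K = K := by
  intro q
  induction q with
  | zero => simp
  | succ q ih =>
      have : k * (q + 1) = k * q + k := by ring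
      rw [this, Function.iterate_add, Set.image_comp, hcyc, ih]


theorem stmt17 (f : unitInterval → unitInterval) (hf : Continuous f)
    (M : ℕ → Set unitInterval) (k : ℕ → ℕ)
    (hM : ∀ n, IsIntervalCycle f (M n) (k n))
    (hnest : ∀ n, M (n + 1) ⊆ M n)
    (hper : Tendsto k atTop atTop)
    (y : unitInterval) (hmeet : (alphaLimit f y ∩ ⋂ n, M n).Nonempty) :
    y ∈ ⋂ n, M n := by
  obtain ⟨z, hzA, hzQ⟩ := hmeet
  obtain ⟨u, hu, hclus⟩ := hzA
  rw [Set.mem_iInter] at hzQ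
  rw [Set.mem_iInter]
  intro n₀
  by_contra hyn
  have hcont : ∀ t : ℕ, Continuous (f^[t]) := fun t => hf.iterate t
  have hfreq := mapClusterPt_iff_frequently.mp hclus
  -- preimages of y avoid M n₀, so near every orbit point of z there are points outside M n₀
  have key : ∀ (t : ℕ) (U : Set unitInterval), IsOpen U → f^[t] z ∈ U →
      ∃ w, w ∈ U ∧ w ∉ M n₀ := by
    intro t U hU hzU
    have hV : (f^[t]) ⁻¹' U ∈ 𝓝 z := (hU.preimage (hcont t)).mem_nhds hzU
    obtain ⟨s, hsV, hst⟩ := ((hfreq _ hV).and_eventually (eventually_ge_atTop t)).exists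
    refine ⟨f^[t] (u s), hsV, fun hmem => hyn ?_⟩
    have hys : f^[s - t] (f^[t] (u s)) = y := by
      rw [← Function.iterate_add_apply, Nat.sub_add_cancel hst, hu s]
    rw [← hys]
    exact cycle_fwd_iter (hM n₀) _ _ hmem
  -- structure of M n₀
  obtain ⟨hk1, K, ⟨a, b, hab, hKab⟩, hdisj, hcyc, hMU⟩ := hM n₀
  set k' := k n₀ with hk'
  have hzM : z ∈ M n₀ := hzQ n₀
  rw [hMU] at hzM
  obtain ⟨i₀, hi₀, w₀, hw₀, hzw₀⟩ := Set.mem_iUnion₂.mp hzM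
  rw [Finset.mem_range] at hi₀
  -- the real interval T = coe '' (f^[i₀] '' K)
  set φ : ℝ → ℝ := fun x => ((f^[i₀] (Set.projIcc (0:ℝ) 1 zero_le_one x) : unitInterval) : ℝ) with hφ
  have hφc : Continuous φ :=
    continuous_subtype_val.comp ((hcont i₀).comp continuous_projIcc)
  set T : Set ℝ := φ '' Set.Icc (a : ℝ) (b : ℝ) with hT
  have hmemIcc : ∀ w' : unitInterval, w' ∈ K → (w' : ℝ) ∈ Set.Icc (a : ℝ) (b : ℝ) := by
    intro w' hw'
    rw [hKab] at hw'
    exact ⟨hw'.1, hw'.2⟩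
  have hφK : ∀ w' : unitInterval, w' ∈ K → φ (w' : ℝ) = ((f^[i₀] w' : unitInterval) : ℝ) := by
    intro w' hw'
    simp only [hφ, Set.projIcc_val]
  -- T ⊆ coe '' M n₀
  have hTsub : ∀ x ∈ T, ∃ w : unitInterval, w ∈ M n₀ ∧ (w : ℝ) = x := by
    rintro x ⟨x', hx', rfl⟩
    have hx01 : x' ∈ Set.Icc (0:ℝ) 1 := ⟨le_trans a.2.1 hx'.1, le_trans hx'.2 b.2.2⟩
    have hproj : Set.projIcc (0:ℝ) 1 zero_le_one x' = ⟨x', hx01⟩ := Set.projIcc_of_mem _ hx01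
    have hK' : (⟨x', hx01⟩ : unitInterval) ∈ K := by
      rw [hKab]
      constructor
      · exact Subtype.coe_le_coe.mp hx'.1
      · exact Subtype.coe_le_coe.mp hx'.2
    refine ⟨f^[i₀] ⟨x', hx01⟩, ?_, ?_⟩
    · rw [hMU]
      exact Set.mem_iUnion₂.mpr ⟨i₀, Finset.mem_range.mpr hi₀, ⟨_, hK', rfl⟩⟩
    · simp only [hφ, hproj]
  -- the orbit points we care about lie in T
  have hPmem : ∀ a' : ℕ, ((f^[a' * k'] z : unitInterval) : ℝ) ∈ T := by
    intro a'
    have hw₁ : f^[k' * a'] w₀ ∈ K := by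
      rw [← cycle_mul hcyc a']
      exact ⟨w₀, hw₀, rfl⟩
    have heq : f^[a' * k'] z = f^[i₀] (f^[k' * a'] w₀) := by
      rw [← hzw₀, ← Function.iterate_add_apply, ← Function.iterate_add_apply]
      congr 1
      ring
    rw [heq, ← hφK _ hw₁]
    exact ⟨_, hmemIcc _ hw₁, rfl⟩
  -- T is a compact interval
  have hTIcc : T = Set.Icc (sInf T) (sSup T) := by
    apply eq_Icc_of_connected_compact
    · refine ⟨⟨φ (a : ℝ), ⟨(a : ℝ), ⟨le_refl _, Subtype.coe_le_coe.mpr hab.le⟩, rfl⟩⟩, ?_⟩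
      exact isPreconnected_Icc.image φ hφc.continuousOn
    · exact isCompact_Icc.image hφc
  -- each orbit point f^[a'*k'] z is an endpoint of T
  have hend : ∀ a' : ℕ, ((f^[a' * k'] z : unitInterval) : ℝ) = sInf T ∨
      ((f^[a' * k'] z : unitInterval) : ℝ) = sSup T := by
    intro a'
    by_contra hcon
    push_neg at hcon
    obtain ⟨hne1, hne2⟩ := hcon
    have hPT := hPmem a'
    have hPT' := hPT
    rw [hTIcc] at hPT'
    have hlt1 : sInf T < ((f^[a' * k'] z : unitInterval) : ℝ) := lt_of_le_of_ne hPT'.1 (Ne.symm hne1)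
    have hlt2 : ((f^[a' * k'] z : unitInterval) : ℝ) < sSup T := lt_of_le_of_ne hPT'.2 hne2
    have hUopen : IsOpen ((Subtype.val : unitInterval → ℝ) ⁻¹' Set.Ioo (sInf T) (sSup T)) :=
      isOpen_Ioo.preimage continuous_subtype_val
    obtain ⟨w, hwU, hwM⟩ := key (a' * k') _ hUopen ⟨hlt1, hlt2⟩
    have hwT : (w : ℝ) ∈ T := by
      rw [hTIcc]
      exact ⟨hwU.1.le, hwU.2.le⟩
    obtain ⟨w', hw'M, hw'e⟩ := hTsub _ hwT
    exact hwM (Subtype.coe_injective hw'e ▸ hw'M)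
  -- pick a deeper cycle with large period
  obtain ⟨m₁, hm₁⟩ := (hper.eventually_ge_atTop (2 * k' + 1)).exists
  obtain ⟨hk1'', K'', ⟨a'', b'', hab'', hK''ab⟩, hdisj'', hcyc'', hMU''⟩ := hM m₁
  set k'' := k m₁ with hk''
  have hzM'' : z ∈ M m₁ := hzQ m₁
  rw [hMU''] at hzM''
  obtain ⟨i₁, hi₁, w₁, hw₁, hzw₁⟩ := Set.mem_iUnion₂.mp hzM''
  rw [Finset.mem_range] at hi₁
  have hk''pos : 0 < k'' := hk1''
  have hmem'' : ∀ t : ℕ, f^[t] z ∈ f^[(i₁ + t) % k''] '' K'' := by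
    intro t
    have hdm := Nat.div_add_mod (i₁ + t) k''
    have hidx : t + i₁ = (i₁ + t) % k'' + k'' * ((i₁ + t) / k'') := by omega
    have hz' : f^[t] z = f^[(i₁ + t) % k''] (f^[k'' * ((i₁ + t) / k'')] w₁) := by
      rw [← hzw₁, ← Function.iterate_add_apply, hidx, Function.iterate_add_apply]
    rw [hz']
    refine ⟨_, ?_, rfl⟩
    rw [← cycle_mul hcyc'' ((i₁ + t) / k'')]
    exact ⟨w₁, hw₁, rfl⟩
  have hdist : ∀ p q : ℕ, p < q → q - p < k'' → f^[p] z ≠ f^[q] z := by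
    intro p q hpq hlt heq
    have h1 := hmem'' p
    have h2 := hmem'' q
    by_cases hmod : (i₁ + p) % k'' = (i₁ + q) % k''
    · have hdvd : k'' ∣ (i₁ + q) - (i₁ + p) := (Nat.modEq_iff_dvd' (by omega)).mp hmod
      have hdvd' : k'' ∣ q - p := by
        have : (i₁ + q) - (i₁ + p) = q - p := by omega
        rwa [this] at hdvd
      have := Nat.le_of_dvd (by omega) hdvd'
      omega
    · have hd := hdisj'' _ _ (Nat.mod_lt _ hk''pos) (Nat.mod_lt _ hk''pos) hmod
      rw [heq] at h1
      exact Set.disjoint_left.mp hd h1 h2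
  have hk'pos : 0 < k' := hk1
  have hne01 : f^[0 * k'] z ≠ f^[1 * k'] z := hdist _ _ (by omega) (by omega)
  have hne02 : f^[0 * k'] z ≠ f^[2 * k'] z := hdist _ _ (by omega) (by omega)
  have hne12 : f^[1 * k'] z ≠ f^[2 * k'] z := hdist _ _ (by omega) (by omega)
  have e0 := hend 0
  have e1 := hend 1
  have e2 := hend 2
  rcases e0 with h0 | h0 <;> rcases e1 with h1 | h1 <;> rcases e2 with h2 | h2 <;>
    first
      | exact hne01 (Subtype.coe_injective (h0.trans h1.symm))
      | exact hne02 (Subtype.coe_injective (h0.trans h2.symm))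
      | exact hne12 (Subtype.coe_injective (h1.trans h2.symm))
end

section
/- Let X be a compact metric space and f : X → X continuous. If y ∈ sα(x), then the entire ω-limit set ω(y) is contained in sα(x); consequently sα(x) contains the forward orbit closure of each of its points minus possibly finitely many initial points, and sα(x) is forward invariant in the sense that f(sα(x)) = sα(x). -/
open Filter Topology Set

private lemma branch_iter {X : Type*} {f : X → X} {x : X} {u : ℕ → X}
    (hu : IsBackwardBranch f x u) : ∀ m n, f^[m] (u (n + m)) = u n := by
  intro m
  induction m with
  | zero => intro n; simp
  | succ m ih =>
    intro n
    rw [Function.iterate_succ_apply, show n + (m + 1) = (n + m) + 1 by ring, hu.2, ih]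

/-- every forward iterate of a cluster point of a backward branch is again a cluster point. -/
private lemma cluster_iter {X : Type*} [TopologicalSpace X] {f : X → X}
    (hf : Continuous f) {x : X} {u : ℕ → X} (hu : IsBackwardBranch f x u) {y : X}
    (hy : MapClusterPt y atTop u) (m : ℕ) : MapClusterPt (f^[m] y) atTop u := by
  rw [mapClusterPt_iff_frequently] at hy ⊢
  intro s hs
  have hpre : f^[m] ⁻¹' s ∈ 𝓝 y := (hf.iterate m).continuousAt.preimage_mem_nhds hs
  have H := hy _ hpre
  rw [frequently_atTop] at H ⊢
  intro N
  obtain ⟨n, hn, hns⟩ := H (N + m)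
  refine ⟨n - m, by omega, ?_⟩
  have hnm : n - m + m = n := by omega
  have := branch_iter hu m (n - m)
  rw [hnm] at this
  rw [← this]
  exact hns

private lemma cluster_of_subseq {X : Type*} [TopologicalSpace X] {u : ℕ → X} {σ : ℕ → ℕ}
    (hσ : Tendsto σ atTop atTop) {w : X} (h : Tendsto (u ∘ σ) atTop (𝓝 w)) :
    MapClusterPt w atTop u := by
  rw [mapClusterPt_iff_frequently]
  intro s hs
  have h1 : ∀ᶠ k in atTop, u (σ k) ∈ s := h.eventually_mem hs
  rw [frequently_atTop]
  intro N
  have h2 : ∀ᶠ k in atTop, N ≤ σ k := hσ.eventually_ge_atTop N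
  obtain ⟨k, hk1, hk2⟩ := (h1.and h2).exists
  exact ⟨σ k, hk2, hk1⟩

theorem stmt19 {X : Type*} [MetricSpace X] [CompactSpace X] (f : X → X)
    (hf : Continuous f) (x : X) :
    (∀ y ∈ sAlpha f x, {z | MapClusterPt z atTop fun n => f^[n] y} ⊆ sAlpha f x) ∧
    (∀ y ∈ sAlpha f x, ∃ N : ℕ, closure {z | ∃ n, N ≤ n ∧ z = f^[n] y} ⊆ sAlpha f x) ∧
    f '' sAlpha f x = sAlpha f x := by
  -- key: closure of the forward orbit of a cluster point of a branch consists of cluster points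
  have key : ∀ y ∈ sAlpha f x, ∀ N : ℕ,
      closure {z | ∃ n, N ≤ n ∧ z = f^[n] y} ⊆ sAlpha f x := by
    rintro y ⟨u, hu, hy⟩ N
    have hclosed : IsClosed {z | MapClusterPt z atTop u} := isClosed_setOf_clusterPt
    have hsub : {z | ∃ n, N ≤ n ∧ z = f^[n] y} ⊆ {z | MapClusterPt z atTop u} := by
      rintro z ⟨n, -, rfl⟩
      exact cluster_iter hf hu hy n
    intro z hz
    exact ⟨u, hu, closure_minimal hsub hclosed hz⟩
  refine ⟨?_, fun y hy => ⟨0, key y hy 0⟩, ?_⟩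
  · rintro y hy z hz
    refine key y hy 0 ?_
    -- z is a cluster point of the orbit sequence, hence in the closure of the orbit set
    have : MapClusterPt z atTop fun n => f^[n] y := hz
    rw [mapClusterPt_iff_frequently] at this
    rw [mem_closure_iff_nhds]
    intro t ht
    obtain ⟨n, hn⟩ := (this t ht).exists
    exact ⟨f^[n] y, hn, n, Nat.zero_le n, rfl⟩
  · apply Set.Subset.antisymm
    · rintro _ ⟨y, ⟨u, hu, hy⟩, rfl⟩
      have := cluster_iter hf hu hy 1
      simpa using ⟨u, hu, this⟩
    · rintro y ⟨u, hu, hy⟩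
      -- extract a converging subsequence u ∘ ψ → y, then a converging subsequence of u ∘ ψ + 1
      obtain ⟨ψ, hψ, hψt⟩ := TopologicalSpace.FirstCountableTopology.tendsto_subseq hy
      obtain ⟨w, φ, hφ, hφt⟩ := CompactSpace.tendsto_subseq (fun k => u (ψ k + 1))
      have hfw : f w = y := by
        have h1 : Tendsto (fun k => f (u (ψ (φ k) + 1))) atTop (𝓝 (f w)) :=
          (hf.tendsto w).comp hφt
        have h2 : (fun k => f (u (ψ (φ k) + 1))) = fun k => u (ψ (φ k)) := by
          funext k; exact hu.2 _
        rw [h2] at h1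
        have h3 : Tendsto (fun k => u (ψ (φ k))) atTop (𝓝 y) := hψt.comp hφ.tendsto_atTop
        exact tendsto_nhds_unique h1 h3
      have hσ : Tendsto (fun k => ψ (φ k) + 1) atTop atTop :=
        tendsto_atTop_atTop.2 fun b =>
          ⟨b, fun a ha => le_trans ha (le_trans (hψ.comp hφ).le_apply (Nat.le_succ _))⟩
      have hw : MapClusterPt w atTop u := cluster_of_subseq hσ hφt
      exact ⟨w, ⟨u, hu, hw⟩, hfw⟩
end
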